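/- arXiv:1506.02255 — 5 statements merged into one kernel-verified Lean document; each statement's English description precedes it below -/
import Mathlib

section
/- Entropy of line families (Lemma 1): Let Λ ⊂ ℤ² be finite with horizontal boundary condition and let (S_i)_{i=1}^n with n ≥ 1 be regions of 𝒮_Λ at pairwise ℤ²-distance > 1. Then Σ_{p≥0} (1/p!) · #{ (L_k)_{k=1}^p ∈ 𝒫ℒ_Λ(∪_i S_i) } ≤ 4^{Σ_{i=1}^n |S_i|}. -/
open scoped BigOperators Classical

noncomputable section

abbrev Site : Type := ℤ × ℤ

/-! ## Connectivity in the lattice `ℤ²` -/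

/-- The nearest-neighbour graph on `ℤ²`. -/
def gridGraph : SimpleGraph Site where
  Adj x y := |x.1 - y.1| + |x.2 - y.2| = 1
  symm := by
    constructor
    intro x y h
    rw [abs_sub_comm y.1 x.1, abs_sub_comm y.2 x.2]
    exact h
  loopless := by constructor; intro x h; simp at h

/-- `S` is connected as a subgraph of `ℤ²`. -/
def ConnectedIn (S : Finset Site) : Prop :=
  (SimpleGraph.induce (↑S : Set Site) gridGraph).Connected

/-- The maximal vertical segment of `S` through `x`. -/
def vSegment (S : Finset Site) (x : Site) : Finset Site :=
  S.filter fun y => y.1 = x.1 ∧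
    ∀ t : ℤ, min x.2 y.2 ≤ t → t ≤ max x.2 y.2 → ((x.1, t) : Site) ∈ S

/-- `𝒮_Λ`: the regions of vertical dimers. `S` is a nonempty connected subset
of `Λ`, every maximal vertical segment of `S` has an even number of sites, and
`S` avoids the set `F` of sites forced by the boundary condition to carry a
horizontal dimer. -/
def IsRegion (Λ F : Finset Site) (S : Finset Site) : Prop :=
  S ⊆ Λ ∧ S.Nonempty ∧ ConnectedIn S ∧
    (∀ x ∈ S, Even (vSegment S x).card) ∧ ∀ x ∈ S, x ∉ F

/-- `𝒫𝒮_Λ`: finite families of regions of `𝒮_Λ` at pairwise `ℤ²`-distance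
`> 1`. -/
def PSfam (Λ F : Finset Site) {n : ℕ} (S : Fin n → Finset Site) : Prop :=
  (∀ i, IsRegion Λ F (S i)) ∧
    ∀ i j : Fin n, i ≠ j → ∀ x ∈ S i, ∀ y ∈ S j,
      1 < (x.1 - y.1).natAbs + (x.2 - y.2).natAbs

/-- `L` is a maximal horizontal line of `A`. -/
def maxHLine (A : Finset Site) (L : Finset Site) : Prop :=
  ∃ yy ll rr : ℤ, ll ≤ rr ∧
    L = (Finset.Icc ll rr).image (fun t => ((t, yy) : Site)) ∧
    (∀ t ∈ Finset.Icc ll rr, ((t, yy) : Site) ∈ A) ∧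
    ((ll - 1, yy) : Site) ∉ A ∧ ((rr + 1, yy) : Site) ∉ A

/-- The lattice `ℤ̃²`: `ℤ²` with all the vertical bonds incident to the set `W`
(the union of the lines) removed. -/
def tildeGraph (W : Set Site) : SimpleGraph Site where
  Adj x y := (|x.1 - y.1| + |x.2 - y.2| = 1) ∧ (x.1 = y.1 → x ∉ W ∧ y ∉ W)
  symm := by
    constructor
    intro x y h
    constructor
    · rw [abs_sub_comm y.1 x.1, abs_sub_comm y.2 x.2]
      exact h.1
    · intro hyx
      exact ⟨(h.2 hyx.symm).2, (h.2 hyx.symm).1⟩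
  loopless := by constructor; intro x h; simp at h

/-- `𝒫ℒ_Λ(V)`: families of pairwise distinct maximal horizontal lines of
`Λ∖V` such that `V` together with the lines is connected in `ℤ̃²`. -/
def PLfam (Λ V : Finset Site) {p : ℕ} (L : Fin p → Finset Site) : Prop :=
  (∀ k, maxHLine (Λ \ V) (L k)) ∧
  (∀ k k' : Fin p, k ≠ k' → L k ≠ L k') ∧
  (SimpleGraph.induce ((↑V : Set Site) ∪ ⋃ k, (↑(L k) : Set Site))
      (tildeGraph (⋃ k, (↑(L k) : Set Site)))).Connected


/-! ### Auxiliary lemmas for the proof -/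

lemma mem_line_iff {y ll rr : ℤ} {L : Finset Site}
    (hL : L = (Finset.Icc ll rr).image (fun t => ((t, y) : Site))) {x : Site} :
    x ∈ L ↔ x.2 = y ∧ ll ≤ x.1 ∧ x.1 ≤ rr := by
  subst hL
  simp only [Finset.mem_image, Finset.mem_Icc]
  constructor
  · rintro ⟨t, ⟨h1, h2⟩, rfl⟩; exact ⟨rfl, h1, h2⟩
  · rintro ⟨h0, h1, h2⟩
    exact ⟨x.1, ⟨h1, h2⟩, by cases x with | mk a b => simp only at h0; simp [h0]⟩

lemma maxHLine_subset {A L : Finset Site} (h : maxHLine A L) : ∀ x ∈ L, x ∈ A := by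
  obtain ⟨y, ll, rr, hle, hIm, hsub, hl, hr⟩ := h
  intro x hx
  rw [hIm, Finset.mem_image] at hx
  obtain ⟨t, ht, rfl⟩ := hx
  exact hsub t ht

lemma tilde_adj_of_mem {W : Set Site} {x z : Site} (hx : x ∈ W)
    (h : (tildeGraph W).Adj x z) :
    z = (x.1 - 1, x.2) ∨ z = (x.1 + 1, x.2) := by
  obtain ⟨h1, h2⟩ := h
  have hne : x.1 ≠ z.1 := fun he => (h2 he).1 hx
  have hge : 1 ≤ |x.1 - z.1| := Int.one_le_abs (by omega)
  have hb0 : |x.2 - z.2| = 0 := by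
    have := abs_nonneg (x.2 - z.2); omega
  have hb : x.2 = z.2 := by have := abs_eq_zero.mp hb0; omega
  have ha : |x.1 - z.1| = 1 := by omega
  rcases (abs_eq (by norm_num : (0:ℤ) ≤ 1)).mp ha with h | h
  · left; rw [Prod.ext_iff]; exact ⟨by omega, hb.symm⟩
  · right; rw [Prod.ext_iff]; exact ⟨by omega, hb.symm⟩

lemma line_endpoint (A V : Finset Site) (hV : (↑V : Set Site).Nonempty) {p : ℕ}
    (L : Fin p → Finset Site)
    (hlines : ∀ k, maxHLine A (L k))
    (hconn : (SimpleGraph.induce ((↑V : Set Site) ∪ ⋃ k, (↑(L k) : Set Site))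
        (tildeGraph (⋃ k, (↑(L k) : Set Site)))).Connected)
    (hdisj : ∀ x ∈ A, x ∉ V)
    (k : Fin p) {y ll rr : ℤ} (hle : ll ≤ rr)
    (hIm : L k = (Finset.Icc ll rr).image (fun t => ((t, y) : Site)))
    (hl : ((ll - 1, y) : Site) ∉ A) (hr : ((rr + 1, y) : Site) ∉ A) :
    ((ll - 1, y) : Site) ∈ V ∨ ((rr + 1, y) : Site) ∈ V := by
  by_contra hcon
  push_neg at hcon
  obtain ⟨hnl, hnr⟩ := hcon
  set W : Set Site := ⋃ k, (↑(L k) : Set Site) with hW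
  set U : Set Site := (↑V : Set Site) ∪ W with hU
  have hnotline : ∀ z : Site, z ∉ A → z ∉ W := by
    intro z hz hzW
    rw [Set.mem_iUnion] at hzW
    obtain ⟨k', hk'⟩ := hzW
    exact hz (maxHLine_subset (hlines k') z hk')
  have hclose : ∀ (a b : U), (SimpleGraph.induce U (tildeGraph W)).Adj a b →
      a.val ∈ L k → b.val ∈ L k := by
    intro a b hab ha
    have haW : a.val ∈ W := Set.mem_iUnion.mpr ⟨k, ha⟩
    have hadj : (tildeGraph W).Adj a.val b.val := hab
    rcases tilde_adj_of_mem haW hadj with hb | hb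
    · rw [mem_line_iff hIm] at ha ⊢
      obtain ⟨ha2, ha1l, ha1r⟩ := ha
      by_cases hll : ll ≤ a.val.1 - 1
      · rw [hb]; exact ⟨ha2, hll, by omega⟩
      · exfalso
        have hb' : b.val = ((ll - 1, y) : Site) := by
          rw [hb, Prod.ext_iff]; exact ⟨by omega, ha2⟩
        have hbU : b.val ∈ U := b.2
        rcases hbU with hbV | hbW
        · rw [hb'] at hbV; exact hnl hbV
        · rw [hb'] at hbW; exact hnotline _ hl hbW
    · rw [mem_line_iff hIm] at ha ⊢
      obtain ⟨ha2, ha1l, ha1r⟩ := ha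
      by_cases hrr : a.val.1 + 1 ≤ rr
      · rw [hb]; exact ⟨ha2, by omega, hrr⟩
      · exfalso
        have hb' : b.val = ((rr + 1, y) : Site) := by
          rw [hb, Prod.ext_iff]; exact ⟨by omega, ha2⟩
        have hbU : b.val ∈ U := b.2
        rcases hbU with hbV | hbW
        · rw [hb'] at hbV; exact hnr hbV
        · rw [hb'] at hbW; exact hnotline _ hr hbW
  have hwalk : ∀ (a b : U), (SimpleGraph.induce U (tildeGraph W)).Walk a b →
      a.val ∈ L k → b.val ∈ L k := by
    intro a b w
    induction w with
    | nil => exact id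
    | cons h _ ih => intro ha; exact ih (hclose _ _ h ha)
  obtain ⟨v, hv⟩ := hV
  have hxL : ((ll, y) : Site) ∈ L k := by
    rw [mem_line_iff hIm]; exact ⟨rfl, le_refl _, hle⟩
  have hxU : ((ll, y) : Site) ∈ U := Or.inr (Set.mem_iUnion.mpr ⟨k, hxL⟩)
  have hvU : v ∈ U := Or.inl hv
  obtain ⟨w⟩ := hconn.preconnected ⟨_, hxU⟩ ⟨v, hvU⟩
  have hvL : v ∈ L k := hwalk _ _ w hxL
  exact hdisj v (maxHLine_subset (hlines k) v hvL) hv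

/-- A "good" line: a maximal horizontal line of `A` (with data) one of whose
outer horizontal neighbours lies in `V`. -/
def GoodLine (A V : Finset Site) (L : Finset Site) : Prop :=
  ∃ y ll rr : ℤ, ll ≤ rr ∧
    L = (Finset.Icc ll rr).image (fun t => ((t, y) : Site)) ∧
    (∀ t ∈ Finset.Icc ll rr, ((t, y) : Site) ∈ A) ∧
    ((ll - 1, y) : Site) ∉ A ∧ ((rr + 1, y) : Site) ∉ A ∧
    (((ll - 1, y) : Site) ∈ V ∨ ((rr + 1, y) : Site) ∈ V)

/-- Tagging data for a good line. -/
def LineSpec (A V : Finset Site) (L : Finset Site) (d : Site × Bool) : Prop :=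
  ∃ y ll rr : ℤ, ll ≤ rr ∧
    L = (Finset.Icc ll rr).image (fun t => ((t, y) : Site)) ∧
    (∀ t ∈ Finset.Icc ll rr, ((t, y) : Site) ∈ A) ∧
    ((ll - 1, y) : Site) ∉ A ∧ ((rr + 1, y) : Site) ∉ A ∧
    ((d.2 = true ∧ d.1 = ((ll - 1, y) : Site) ∧ ((ll - 1, y) : Site) ∈ V) ∨
     (d.2 = false ∧ d.1 = ((rr + 1, y) : Site) ∧ ((rr + 1, y) : Site) ∈ V))

lemma lineSpec_inj {A V : Finset Site} {L L' : Finset Site} {d : Site × Bool}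
    (h : LineSpec A V L d) (h' : LineSpec A V L' d) : L = L' := by
  obtain ⟨y, ll, rr, hle, hIm, hsub, hl, hr, hd⟩ := h
  obtain ⟨y', ll', rr', hle', hIm', hsub', hl', hr', hd'⟩ := h'
  rcases hd with ⟨hb, he, -⟩ | ⟨hb, he, -⟩ <;> rcases hd' with ⟨hb', he', -⟩ | ⟨hb', he', -⟩
  · -- both left endpoints
    have hyy : ll - 1 = ll' - 1 ∧ y = y' := by
      rw [he'] at he
      have := Prod.ext_iff.mp he
      exact ⟨this.1.symm, this.2.symm⟩
    obtain ⟨h1, h2⟩ := hyy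
    have hll : ll = ll' := by omega
    subst h2; subst hll
    have hrr : rr = rr' := by
      rcases lt_trichotomy rr rr' with h | h | h
      · exact absurd (hsub' (rr + 1) (Finset.mem_Icc.mpr ⟨by omega, by omega⟩)) hr
      · exact h
      · exact absurd (hsub (rr' + 1) (Finset.mem_Icc.mpr ⟨by omega, by omega⟩)) hr'
    rw [hIm, hIm', hrr]
  · rw [hb] at hb'; exact absurd hb' (by simp)
  · rw [hb] at hb'; exact absurd hb' (by simp)
  · -- both right endpoints
    have hyy : rr + 1 = rr' + 1 ∧ y = y' := by
      rw [he'] at he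
      have := Prod.ext_iff.mp he
      exact ⟨this.1.symm, this.2.symm⟩
    obtain ⟨h1, h2⟩ := hyy
    have hrr : rr = rr' := by omega
    subst h2; subst hrr
    have hll : ll = ll' := by
      rcases lt_trichotomy ll ll' with h | h | h
      · exact absurd (hsub (ll' - 1) (Finset.mem_Icc.mpr ⟨by omega, by omega⟩)) hl'
      · exact h
      · exact absurd (hsub' (ll - 1) (Finset.mem_Icc.mpr ⟨by omega, by omega⟩)) hl
    rw [hIm, hIm', hll]

lemma goodLine_finite (A V : Finset Site) :
    {L : Finset Site | GoodLine A V L}.Finite ∧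
    {L : Finset Site | GoodLine A V L}.ncard ≤ 2 * V.card := by
  classical
  have hch : ∀ L : Finset Site, ∃ d : Site × Bool,
      GoodLine A V L → LineSpec A V L d := by
    intro L
    by_cases h : GoodLine A V L
    · obtain ⟨y, ll, rr, hle, hIm, hsub, hl, hr, hV⟩ := h
      by_cases hc : ((ll - 1, y) : Site) ∈ V
      · exact ⟨(((ll - 1, y) : Site), true), fun _ =>
          ⟨y, ll, rr, hle, hIm, hsub, hl, hr, Or.inl ⟨rfl, rfl, hc⟩⟩⟩
      · have hc' : ((rr + 1, y) : Site) ∈ V := hV.resolve_left hc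
        exact ⟨(((rr + 1, y) : Site), false), fun _ =>
          ⟨y, ll, rr, hle, hIm, hsub, hl, hr, Or.inr ⟨rfl, rfl, hc'⟩⟩⟩
    · exact ⟨(((0, 0) : Site), true), fun hg => absurd hg h⟩
  choose f hf using hch
  have hinj : Set.InjOn f {L : Finset Site | GoodLine A V L} := by
    intro L hL L' hL' he
    exact lineSpec_inj (hf L hL) (he ▸ hf L' hL')
  have himg : f '' {L : Finset Site | GoodLine A V L} ⊆
      ↑(V ×ˢ ({true, false} : Finset Bool)) := by
    rintro d ⟨L, hL, rfl⟩
    obtain ⟨y, ll, rr, -, -, -, -, -, hd⟩ := hf L hL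
    rcases hd with ⟨hb, he, hm⟩ | ⟨hb, he, hm⟩ <;>
      · refine Finset.mem_coe.mpr (Finset.mem_product.mpr ⟨?_, ?_⟩)
        · rw [he]; exact hm
        · simp
  have hfin : ({L : Finset Site | GoodLine A V L}).Finite :=
    Set.Finite.of_finite_image ((V ×ˢ ({true, false} : Finset Bool)).finite_toSet.subset himg) hinj
  refine ⟨hfin, ?_⟩
  calc {L : Finset Site | GoodLine A V L}.ncard
      = (f '' {L : Finset Site | GoodLine A V L}).ncard :=
        (Set.ncard_image_of_injOn hinj).symm
    _ ≤ (↑(V ×ˢ ({true, false} : Finset Bool)) : Set (Site × Bool)).ncard :=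
        Set.ncard_le_ncard himg (V ×ˢ ({true, false} : Finset Bool)).finite_toSet
    _ = (V ×ˢ ({true, false} : Finset Bool)).card := Set.ncard_coe_finset _
    _ = 2 * V.card := by rw [Finset.card_product]; simp [mul_comm]

/-- **Lemma 1 (entropy of line families).** Let `Λ ⊂ ℤ²` be finite with
horizontal boundary condition (whose forced sites are `F`) and let
`(S_i)_{i=1}^n`, `n ≥ 1`, be a family of regions of `𝒮_Λ` at pairwise
distance `> 1`. Then `Σ_{p≥0} (1/p!)·#𝒫ℒ_Λ^{(p)}(∪_i S_i) ≤ 4^{Σ_i |S_i|}`. -/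
theorem entropy_of_line_families (Λ F : Finset Site) (n : ℕ) (hn : 1 ≤ n)
    (S : Fin n → Finset Site) (hS : PSfam Λ F S) :
    (∀ p : ℕ,
      {L : Fin p → Finset Site | PLfam Λ (Finset.univ.biUnion S) L}.Finite) ∧
    ∑' p : ℕ, ((p.factorial : ℝ))⁻¹ *
        ({L : Fin p → Finset Site |
            PLfam Λ (Finset.univ.biUnion S) L}.ncard : ℝ) ≤
      4 ^ (∑ i, (S i).card) := by
  classical
  obtain ⟨hreg, hdist⟩ := hS
  set V : Finset Site := Finset.univ.biUnion S with hVdef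
  set m : ℕ := ∑ i, (S i).card with hmdef
  have hVne : (↑V : Set Site).Nonempty := by
    obtain ⟨x, hx⟩ := (hreg ⟨0, hn⟩).2.1
    exact ⟨x, Finset.mem_coe.mpr (Finset.mem_biUnion.mpr ⟨⟨0, hn⟩, Finset.mem_univ _, hx⟩)⟩
  have hgood : ∀ (p : ℕ) (L : Fin p → Finset Site), PLfam Λ V L → ∀ k,
      L k ∈ {M : Finset Site | GoodLine (Λ \ V) V M} := by
    intro p L hPL k
    obtain ⟨y, ll, rr, hle, hIm, hsub, hl, hr⟩ := hPL.1 k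
    exact ⟨y, ll, rr, hle, hIm, hsub, hl, hr,
      line_endpoint (Λ \ V) V hVne L hPL.1 hPL.2.2
        (fun x hx => (Finset.mem_sdiff.mp hx).2) k hle hIm hl hr⟩
  obtain ⟨hGfin, hGcard⟩ := goodLine_finite (Λ \ V) V
  set GF : Finset (Finset Site) := hGfin.toFinset with hGFdef
  set N : ℕ := GF.card with hNdef
  have hNm : N ≤ 2 * m := by
    have h1 : N = {M : Finset Site | GoodLine (Λ \ V) V M}.ncard :=
      (Set.ncard_eq_toFinset_card _ hGfin).symm
    have h2 : V.card ≤ m := by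
      rw [hVdef, hmdef]; exact Finset.card_biUnion_le
    omega
  have hPfin : ∀ p, {L : Fin p → Finset Site | PLfam Λ V L}.Finite := by
    intro p
    refine Set.Finite.subset (Set.Finite.pi (fun _ : Fin p => hGfin)) ?_
    intro L hL
    rw [Set.mem_pi]
    exact fun k _ => hgood p L hL k
  have hPcard : ∀ p, {L : Fin p → Finset Site | PLfam Λ V L}.ncard ≤
      N.descFactorial p := by
    intro p
    have he : ∀ (L : {L : Fin p → Finset Site // PLfam Λ V L}) (k : Fin p),
        L.1 k ∈ GF := fun L k => hGfin.mem_toFinset.mpr (hgood p L.1 L.2 k)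
    have hcard : Nat.card {L : Fin p → Finset Site // PLfam Λ V L}
        ≤ Nat.card (Fin p ↪ {x // x ∈ GF}) := by
      refine Nat.card_le_card_of_injective
        (fun L => ⟨fun k => ⟨L.1 k, he L k⟩, fun {k k'} h =>
          Classical.byContradiction fun hne =>
            L.2.2.1 k k' hne (congrArg Subtype.val h)⟩) ?_
      intro L L' hLL
      apply Subtype.ext
      funext k
      have h1 := congrFun (congrArg (fun (e : Fin p ↪ {x // x ∈ GF}) =>
        (e : Fin p → {x // x ∈ GF})) hLL) k
      exact congrArg Subtype.val h1
    have h2 : Nat.card (Fin p ↪ {x // x ∈ GF}) = N.descFactorial p := by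
      rw [Nat.card_eq_fintype_card, Fintype.card_embedding_eq, Fintype.card_coe,
        Fintype.card_fin]
    have h3 : {L : Fin p → Finset Site | PLfam Λ V L}.ncard
        = Nat.card {L : Fin p → Finset Site // PLfam Λ V L} :=
      (Nat.card_coe_set_eq _).symm
    omega
  refine ⟨hPfin, ?_⟩
  set f : ℕ → ℝ := fun p => ((p.factorial : ℝ))⁻¹ *
    ({L : Fin p → Finset Site | PLfam Λ V L}.ncard : ℝ) with hfdef
  set g : ℕ → ℝ := fun p => (N.choose p : ℝ) with hgdef
  have hgzero : ∀ p ∉ Finset.range (N + 1), g p = 0 := by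
    intro p hp
    have : N < p := by simpa [Finset.mem_range] using hp
    simp [hgdef, Nat.choose_eq_zero_of_lt this]
  have hgsum : Summable g := summable_of_ne_finset_zero hgzero
  have hterm : ∀ p : ℕ, f p ≤ g p := by
    intro p
    have h1 : (({L : Fin p → Finset Site | PLfam Λ V L}.ncard : ℕ) : ℝ)
        ≤ (N.descFactorial p : ℝ) := Nat.cast_le.mpr (hPcard p)
    have h2 : (N.descFactorial p : ℝ) = (p.factorial : ℝ) * (N.choose p : ℝ) := by
      rw [Nat.descFactorial_eq_factorial_mul_choose]
      push_cast; ring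
    have hfac : (0:ℝ) < (p.factorial : ℝ) := Nat.cast_pos.mpr p.factorial_pos
    calc f p ≤ ((p.factorial : ℝ))⁻¹ * ((p.factorial : ℝ) * (N.choose p : ℝ)) := by
          rw [← h2]
          exact mul_le_mul_of_nonneg_left h1 (by positivity)
      _ = (N.choose p : ℝ) := by field_simp
  have hfnn : ∀ p, 0 ≤ f p := by
    intro p
    exact mul_nonneg (by positivity) (Nat.cast_nonneg _)
  have hfsum : Summable f := Summable.of_nonneg_of_le hfnn hterm hgsum
  have htle : ∑' p, f p ≤ ∑' p, g p := Summable.tsum_le_tsum hterm hfsum hgsum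
  have hgt : ∑' p, g p = (2:ℝ) ^ N := by
    rw [tsum_eq_sum hgzero]
    have : ∑ p ∈ Finset.range (N + 1), g p
        = ((∑ p ∈ Finset.range (N + 1), N.choose p : ℕ) : ℝ) := by
      rw [Nat.cast_sum]
    rw [this, Nat.sum_range_choose]
    push_cast; ring
  calc ∑' p, f p ≤ (2:ℝ) ^ N := by rw [← hgt]; exact htle
    _ ≤ (2:ℝ) ^ (2 * m) := by
        apply pow_le_pow_right₀ (by norm_num : (1:ℝ) ≤ 2) hNm
    _ = (4:ℝ) ^ m := by rw [pow_mul]; norm_num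
end
end

section
/- Tree-indexed entropy bound for families of regions (Lemma 4): Let n ≥ 1, let 𝒯 be a tree on the vertices {1,…,n}, let s_i ≥ 2 for each i and d_{ij} ≥ 2 for each edge (i,j) ∈ 𝒯. Then: (a) for every finite A ⊂ ℤ² and every 1 ≤ d < ∞, the number of families (S_i)_{i=1}^n ∈ 𝒫𝒮_Λ with dist_h(S_1,A) = d, |S_i| = s_i for all i, and dist_h(S_i,S_j) = d_{ij} for all (i,j) ∈ 𝒯, is at most |A| · ∏_{i=1}^n (32/3)·4^{4s_i}·s_i^{deg_𝒯(i)}; and (b) for every x ∈ ℤ², the number of families (S_i)_{i=1}^n ∈ 𝒫𝒮_Λ with S_1 ∋ x, |S_i| = s_i for all i, and dist_h(S_i,S_j) = d_{ij} for all (i,j) ∈ 𝒯, is at most ∏_{i=1}^n (32/3)·4^{4s_i}·s_i^{deg_𝒯(i)}. -/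
open scoped BigOperators Classical

noncomputable section

/-- `dist_h(S,A) = d`: the horizontal distance between `S` and `A`
(`dist_h(x,y) = |x_h − y_h|` if `x_v = y_v`, `+∞` otherwise, minimised over
pairs) equals `d`. -/
def hDistEq (S A : Finset Site) (d : ℕ) : Prop :=
  (∃ x ∈ S, ∃ y ∈ A, x.2 = y.2 ∧ (x.1 - y.1).natAbs = d) ∧
  (∀ x ∈ S, ∀ y ∈ A, x.2 = y.2 → d ≤ (x.1 - y.1).natAbs)

namespace TIE

def step (x : Site) : Fin 4 → Site
  | 0 => (x.1 + 1, x.2)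
  | 1 => (x.1 - 1, x.2)
  | 2 => (x.1, x.2 + 1)
  | 3 => (x.1, x.2 - 1)

def traj (x : Site) : List (Fin 4) → List Site
  | [] => [x]
  | d :: l => x :: traj (step x d) l

lemma traj_ne_nil (x : Site) (l : List (Fin 4)) : traj x l ≠ [] := by
  cases l <;> simp [traj]

lemma mem_traj_self (x : Site) (l : List (Fin 4)) : x ∈ traj x l := by
  cases l <;> simp [traj]

lemma traj_length (x : Site) (l : List (Fin 4)) : (traj x l).length = l.length + 1 := by
  induction l generalizing x with
  | nil => rfl
  | cons d l ih => simp [traj, ih]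

lemma foldl_mem_traj (x : Site) (l : List (Fin 4)) : l.foldl step x ∈ traj x l := by
  induction l generalizing x with
  | nil => simp [traj]
  | cons d l ih => simp [traj, List.foldl_cons]; right; exact ih (step x d)

lemma traj_append_toFinset (x : Site) (l₁ l₂ : List (Fin 4)) :
    (traj x (l₁ ++ l₂)).toFinset =
      (traj x l₁).toFinset ∪ (traj (l₁.foldl step x) l₂).toFinset := by
  induction l₁ generalizing x with
  | nil =>
    simp only [List.nil_append, List.foldl_nil]
    have : (traj x []).toFinset = {x} := by simp [traj]
    rw [this]
    have := mem_traj_self x l₂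
    ext y; simp; intro hy; subst hy; exact List.mem_toFinset.mp (by simpa using this)
  | cons d l₁ ih =>
    show (x :: traj (step x d) (l₁ ++ l₂)).toFinset = _
    rw [List.toFinset_cons, ih (step x d)]
    have h2 : (traj x (d :: l₁)).toFinset = insert x (traj (step x d) l₁).toFinset := by
      show (x :: traj (step x d) l₁).toFinset = _
      rw [List.toFinset_cons]
    rw [h2, List.foldl_cons]
    ext y; simp only [Finset.mem_insert, Finset.mem_union]; tauto

lemma mem_traj_iff (x y : Site) (l : List (Fin 4)) :
    y ∈ traj x l ↔ ∃ k, k ≤ l.length ∧ (l.take k).foldl step x = y := by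
  induction l generalizing x with
  | nil =>
    constructor
    · intro hy
      have hyx : y = x := by simpa [traj] using hy
      exact ⟨0, Nat.zero_le _, by simp [hyx]⟩
    · rintro ⟨k, -, h⟩
      rw [List.take_nil] at h
      simp [traj, ← h]
  | cons d l ih =>
    simp only [traj, List.mem_cons, ih]
    constructor
    · rintro (rfl | ⟨k, hk, rfl⟩)
      · exact ⟨0, by simp⟩
      · exact ⟨k + 1, by simpa using hk, by simp⟩
    · rintro ⟨k, hk, rfl⟩
      cases k with
      | zero => left; simp
      | succ k => right; exact ⟨k, by simpa using hk, by simp⟩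

end TIE
namespace TIE

lemma adj_exists_dir {w v : Site} (h : gridGraph.Adj w v) :
    ∃ d d' : Fin 4, step w d = v ∧ step v d' = w := by
  have h1 : |w.1 - v.1| + |w.2 - v.2| = 1 := h
  have h2 : (w.1 - v.1).natAbs + (w.2 - v.2).natAbs = 1 := by
    rw [Int.abs_eq_natAbs, Int.abs_eq_natAbs] at h1
    exact_mod_cast h1
  have hc : (w.1 - v.1 = 1 ∧ w.2 = v.2) ∨ (w.1 - v.1 = -1 ∧ w.2 = v.2) ∨
      (w.1 = v.1 ∧ w.2 - v.2 = 1) ∨ (w.1 = v.1 ∧ w.2 - v.2 = -1) := by omega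
  rcases hc with ⟨ha, hb⟩ | ⟨ha, hb⟩ | ⟨ha, hb⟩ | ⟨ha, hb⟩
  · exact ⟨1, 0, by simp [step, Prod.ext_iff]; omega, by simp [step, Prod.ext_iff]; omega⟩
  · exact ⟨0, 1, by simp [step, Prod.ext_iff]; omega, by simp [step, Prod.ext_iff]; omega⟩
  · exact ⟨3, 2, by simp [step, Prod.ext_iff]; omega, by simp [step, Prod.ext_iff]; omega⟩
  · exact ⟨2, 3, by simp [step, Prod.ext_iff]; omega, by simp [step, Prod.ext_iff]; omega⟩

lemma splice {x w v : Site} {l : List (Fin 4)} (hw : w ∈ traj x l)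
    (hadj : gridGraph.Adj w v) :
    ∃ l' : List (Fin 4), l'.length = l.length + 2 ∧
      (traj x l').toFinset = insert v (traj x l).toFinset := by
  obtain ⟨k, hk, hfold⟩ := (mem_traj_iff x w l).mp hw
  obtain ⟨d, d', hd, hd'⟩ := adj_exists_dir hadj
  refine ⟨l.take k ++ ([d, d'] ++ l.drop k), ?_, ?_⟩
  · simp [List.length_take, List.length_drop]; omega
  · have e1 := traj_append_toFinset x (l.take k) ([d, d'] ++ l.drop k)
    rw [hfold] at e1
    have e2 := traj_append_toFinset w [d, d'] (l.drop k)
    have efold : ([d, d'] : List (Fin 4)).foldl step w = w := by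
      simp [List.foldl_cons, hd, hd']
    rw [efold] at e2
    have e3 : (traj w [d, d']).toFinset = {w, v} := by
      show ([w, step w d, step (step w d) d'] : List Site).toFinset = _
      rw [hd, hd']
      ext y; simp; tauto
    have e4 : (traj x l).toFinset =
        (traj x (l.take k)).toFinset ∪ (traj w (l.drop k)).toFinset := by
      conv_lhs => rw [← List.take_append_drop k l]
      rw [traj_append_toFinset, hfold]
    have hwmem : w ∈ (traj x (l.take k)).toFinset := by
      rw [← hfold]; exact List.mem_toFinset.mpr (foldl_mem_traj _ _)
    rw [e1, e2, e3, e4]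
    ext y
    simp only [Finset.mem_insert, Finset.mem_union, Finset.mem_singleton] at *
    constructor
    · rintro (h | (rfl | rfl) | h)
      · exact Or.inr (Or.inl h)
      · exact Or.inr (Or.inl hwmem)
      · exact Or.inl rfl
      · exact Or.inr (Or.inr h)
    · rintro (rfl | h | h)
      · exact Or.inr (Or.inl (Or.inr rfl))
      · exact Or.inl h
      · exact Or.inr (Or.inr h)

end TIE
namespace TIE

lemma grow : ∀ (m : ℕ) (S : Finset Site), ConnectedIn S → ∀ x ∈ S, ∀ l : List (Fin 4),
    (traj x l).toFinset ⊆ S → S.card - (traj x l).toFinset.card = m →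
    ∃ l', l'.length = l.length + 2 * m ∧ (traj x l').toFinset = S := by
  intro m
  induction m with
  | zero =>
    intro S hS x hx l hsub hcard
    have hle := Finset.card_le_card hsub
    exact ⟨l, by omega, Finset.eq_of_subset_of_card_le hsub (by omega)⟩
  | succ m ih =>
    intro S hS x hx l hsub hcard
    have hlt : (traj x l).toFinset.card < S.card := by
      have := Finset.card_le_card hsub; omega
    obtain ⟨b, hbS, hbn⟩ : ∃ b ∈ S, b ∉ (traj x l).toFinset := by
      by_contra hcon
      push_neg at hcon
      have := Finset.card_le_card hcon
      omega
    have hxS : (x : Site) ∈ (↑S : Set Site) := hx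
    have hbS' : (b : Site) ∈ (↑S : Set Site) := hbS
    obtain ⟨wk⟩ := hS.preconnected ⟨x, hxS⟩ ⟨b, hbS'⟩
    have hxT : (⟨x, hxS⟩ : (↑S : Set Site)) ∈
        {y : (↑S : Set Site) | (y : Site) ∈ (traj x l).toFinset} :=
      List.mem_toFinset.mpr (mem_traj_self x l)
    have hbT : (⟨b, hbS'⟩ : (↑S : Set Site)) ∉
        {y : (↑S : Set Site) | (y : Site) ∈ (traj x l).toFinset} := hbn
    obtain ⟨dart, hdmem, hd1, hd2⟩ := wk.exists_boundary_dart _ hxT hbT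
    have hadj : gridGraph.Adj (dart.fst : Site) (dart.snd : Site) := dart.adj
    obtain ⟨l2, hlen2, hcov2⟩ :=
      splice (List.mem_toFinset.mp hd1) hadj
    have hnew : ((dart.snd : Site)) ∉ (traj x l).toFinset := hd2
    have hcard2 : (traj x l2).toFinset.card = (traj x l).toFinset.card + 1 := by
      rw [hcov2]; exact Finset.card_insert_of_notMem hnew
    have hsub2 : (traj x l2).toFinset ⊆ S := by
      rw [hcov2]
      exact Finset.insert_subset dart.snd.2 hsub
    obtain ⟨l', hlen', hcov'⟩ := ih S hS x hx l2 hsub2 (by omega)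
    exact ⟨l', by omega, hcov'⟩

lemma tour (S : Finset Site) (hS : ConnectedIn S) (x : Site) (hx : x ∈ S) :
    ∃ l : List (Fin 4), l.length = 2 * (S.card - 1) ∧ (traj x l).toFinset = S := by
  have h0 : (traj x ([] : List (Fin 4))).toFinset = {x} := by simp [traj]
  have hpos : 1 ≤ S.card := Finset.card_pos.mpr ⟨x, hx⟩
  obtain ⟨l', h1, h2⟩ := grow (S.card - 1) S hS x hx []
    (by rw [h0]; simpa using hx) (by rw [h0]; simp)
  exact ⟨l', by simpa using h1, h2⟩

end TIE
namespace TIE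

def pick (P : Finset Site) (k : ℕ) : Site := P.toList.getD k (0, 0)

def shiftPt (z : Site) (b : Bool) (d : ℕ) : Site :=
  (z.1 + (if b then (d : ℤ) else -(d : ℤ)), z.2)

def trajFin {N : ℕ} (y : Site) (w : Fin N → Fin 4) : Finset Site :=
  (traj y (List.ofFn w)).toFinset

lemma exists_fn_of_list (N : ℕ) (l : List (Fin 4)) (h : l.length = N) :
    ∃ w : Fin N → Fin 4, List.ofFn w = l := by
  subst h; exact ⟨l.get, List.ofFn_get l⟩

lemma shift_exists (y a : Site) (dA : ℕ) (h2 : a.2 = y.2)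
    (h1 : (a.1 - y.1).natAbs = dA) : ∃ b : Bool, shiftPt y b dA = a := by
  by_cases hb : 0 ≤ a.1 - y.1
  · exact ⟨true, Prod.ext (by simp [shiftPt]; omega) (by simp [shiftPt, h2])⟩
  · exact ⟨false, Prod.ext (by simp [shiftPt]; omega) (by simp [shiftPt, h2])⟩

lemma pick_exists (P : Finset Site) (y : Site) (hy : y ∈ P) :
    ∃ k : ℕ, k < P.card ∧ pick P k = y := by
  have hym : y ∈ P.toList := Finset.mem_toList.mpr hy
  obtain ⟨k, hk, hget⟩ := List.mem_iff_getElem.mp hym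
  refine ⟨k, by rwa [Finset.length_toList] at hk, ?_⟩
  rw [pick, List.getD_eq_getElem _ _ hk, hget]

abbrev Code {n : ℕ} (s : Fin n → ℕ) (p : Fin n → Fin n) (A : Finset Site) (r : Fin n) : Type :=
  (Bool × Fin A.card × (Fin (2 * (s r - 1)) → Fin 4)) ×
    ((i : {i : Fin n // i ≠ r}) → Bool × Fin (s (p i.1)) × (Fin (2 * (s i.1 - 1)) → Fin 4))

def dec {n : ℕ} (s : Fin n → ℕ) (p : Fin n → Fin n) (dd : Fin n → Fin n → ℕ)
    (A : Finset Site) (dA : ℕ) (r : Fin n) (c : Code s p A r) :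
    ℕ → Fin n → Finset Site
  | 0, _ => trajFin (shiftPt (pick A c.1.2.1) c.1.1 dA) c.1.2.2
  | fuel + 1, i =>
    if h : i = r then trajFin (shiftPt (pick A c.1.2.1) c.1.1 dA) c.1.2.2
    else
      trajFin (shiftPt (pick (dec s p dd A dA r c fuel (p i)) ((c.2 ⟨i, h⟩).2.1 : ℕ))
        (c.2 ⟨i, h⟩).1 (dd (p i) i)) (c.2 ⟨i, h⟩).2.2

lemma dist_getVert_le {V : Type*} {G : SimpleGraph V} (hconn : G.Connected) :
    ∀ {u v : V} (q : G.Walk u v) (k : ℕ), G.dist u (q.getVert k) ≤ k := by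
  intro u v q
  induction q with
  | nil =>
    intro k
    rw [SimpleGraph.Walk.getVert_of_length_le _ (by simp)]
    simp [SimpleGraph.dist_self]
  | @cons u b v h q ih =>
    intro k
    cases k with
    | zero => simp [SimpleGraph.Walk.getVert_zero]
    | succ k =>
      rw [SimpleGraph.Walk.getVert_cons_succ]
      calc G.dist u (q.getVert k) ≤ G.dist u b + G.dist b (q.getVert k) :=
            hconn.dist_triangle
        _ ≤ 1 + k := add_le_add (le_of_eq (SimpleGraph.dist_eq_one_iff_adj.mpr h)) (ih k)
        _ = k + 1 := by omega

lemma exists_parent {n : ℕ} {𝒯 : SimpleGraph (Fin n)} (hconn : 𝒯.Connected) (r : Fin n) :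
    ∀ i : Fin n, ∃ j : Fin n, i ≠ r → (𝒯.Adj j i ∧ 𝒯.dist r j + 1 = 𝒯.dist r i) := by
  intro i
  by_cases h : i = r
  · exact ⟨r, fun h' => absurd h h'⟩
  · have hd0 : 𝒯.dist r i ≠ 0 :=
      SimpleGraph.dist_ne_zero_iff_ne_and_reachable.mpr ⟨fun hh => h hh.symm, hconn r i⟩
    obtain ⟨q, hq⟩ := (hconn r i).exists_walk_length_eq_dist
    set L := 𝒯.dist r i with hL
    have hL1 : 1 ≤ L := by omega
    refine ⟨q.getVert (L - 1), fun _ => ⟨?_, ?_⟩⟩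
    · have hadj := q.adj_getVert_succ (i := L - 1) (by omega)
      rw [show L - 1 + 1 = L by omega] at hadj
      have hvl : q.getVert L = i := by rw [← hq]; exact q.getVert_length
      rwa [hvl] at hadj
    · have h1 : 𝒯.dist r (q.getVert (L - 1)) ≤ L - 1 := dist_getVert_le hconn q (L - 1)
      have hadj := q.adj_getVert_succ (i := L - 1) (by omega)
      rw [show L - 1 + 1 = L by omega] at hadj
      have hvl : q.getVert L = i := by rw [← hq]; exact q.getVert_length
      rw [hvl] at hadj
      have h2 : 𝒯.dist r i ≤ 𝒯.dist r (q.getVert (L - 1)) + 1 := by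
        calc 𝒯.dist r i ≤ 𝒯.dist r (q.getVert (L - 1)) + 𝒯.dist (q.getVert (L - 1)) i :=
              hconn.dist_triangle
          _ = 𝒯.dist r (q.getVert (L - 1)) + 1 := by
              rw [SimpleGraph.dist_eq_one_iff_adj.mpr hadj]
      omega

end TIE
namespace TIE

lemma cardCode {n : ℕ} (s : Fin n → ℕ) (p : Fin n → Fin n) (A : Finset Site) (r : Fin n) :
    Fintype.card (Code s p A r)
      = (2 * A.card * 4 ^ (2 * (s r - 1))) *
        ∏ i ∈ Finset.univ.erase r, (2 * s (p i) * 4 ^ (2 * (s i - 1))) := by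
  classical
  rw [Fintype.card_prod]
  congr 1
  · simp [Fintype.card_fun]
    ring
  · rw [Fintype.card_pi]
    rw [Finset.prod_subtype (p := fun i => i ≠ r) (Finset.univ.erase r) (fun x => by simp [Finset.mem_erase])
      (fun i => 2 * s (p i) * 4 ^ (2 * (s i - 1)))]
    refine Finset.prod_congr rfl fun a _ => ?_
    simp [Fintype.card_fun]
    ring

end TIE
namespace TIE

lemma finalIneq {n : ℕ} (𝒯 : SimpleGraph (Fin n)) (s : Fin n → ℕ) (hs : ∀ i, 2 ≤ s i)
    (p : Fin n → Fin n) (r : Fin n) (hpadj : ∀ i, i ≠ r → 𝒯.Adj (p i) i) (A : Finset Site) :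
    (((2 * A.card * 4 ^ (2 * (s r - 1))) *
        ∏ i ∈ Finset.univ.erase r, (2 * s (p i) * 4 ^ (2 * (s i - 1))) : ℕ) : ℝ) ≤
      (A.card : ℝ) * ∏ i, (32 / 3 * 4 ^ (4 * s i) * (s i : ℝ) ^ (𝒯.neighborSet i).ncard) := by
  classical
  set E := Finset.univ.erase r with hE
  have hone : ∀ j, (1:ℝ) ≤ (s j : ℝ) := fun j => by
    have h1 : (1:ℕ) ≤ s j := le_trans (by norm_num) (hs j)
    exact_mod_cast h1
  have hBnum : ∀ t : ℕ, (2:ℝ) * 4 ^ (2 * (t - 1)) ≤ 32 / 3 * 4 ^ (4 * t) := by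
    intro t
    have h4 : (4:ℝ) ^ (2 * (t - 1)) ≤ 4 ^ (4 * t) :=
      pow_le_pow_right₀ (by norm_num) (by omega)
    calc (2:ℝ) * 4 ^ (2 * (t - 1)) ≤ (32 / 3) * 4 ^ (2 * (t - 1)) :=
          mul_le_mul_of_nonneg_right (by norm_num) (by positivity)
      _ ≤ 32 / 3 * 4 ^ (4 * t) := mul_le_mul_of_nonneg_left h4 (by norm_num)
  have hfiber : ∀ j, E.filter (fun i => p i = j) ⊆ 𝒯.neighborFinset j := by
    intro j i hi
    rw [Finset.mem_filter, hE, Finset.mem_erase] at hi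
    obtain ⟨⟨hir, -⟩, hpi⟩ := hi
    rw [SimpleGraph.mem_neighborFinset]
    exact hpi ▸ hpadj i hir
  have hdeg : ∀ j, (E.filter (fun i => p i = j)).card ≤ (𝒯.neighborSet j).ncard := by
    intro j
    rw [Set.ncard_eq_toFinset_card']
    exact Finset.card_le_card (hfiber j)
  have hA : ∏ i ∈ E, (s (p i) : ℝ) ≤ ∏ j, (s j : ℝ) ^ (𝒯.neighborSet j).ncard := by
    rw [← Finset.prod_fiberwise_of_maps_to (fun x _ => Finset.mem_univ (p x))
      (fun i => (s (p i) : ℝ))]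
    refine Finset.prod_le_prod (fun j _ => Finset.prod_nonneg fun i _ => by positivity)
      (fun j _ => ?_)
    have h1 : ∏ i ∈ E.filter (fun i => p i = j), (s (p i) : ℝ)
        = (s j : ℝ) ^ (E.filter (fun i => p i = j)).card := by
      rw [← Finset.prod_const]
      refine Finset.prod_congr rfl fun i hi => ?_
      rw [(Finset.mem_filter.mp hi).2]
    rw [h1]
    exact pow_le_pow_right₀ (hone j) (hdeg j)
  have hsplit : ∏ i ∈ E, ((2:ℝ) * (s (p i) : ℝ) * 4 ^ (2 * (s i - 1)))
      = (∏ i ∈ E, ((2:ℝ) * 4 ^ (2 * (s i - 1)))) * ∏ i ∈ E, ((s (p i) : ℝ)) := by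
    rw [← Finset.prod_mul_distrib]
    exact Finset.prod_congr rfl fun i _ => by ring
  calc ((((2 * A.card * 4 ^ (2 * (s r - 1))) *
        ∏ i ∈ E, (2 * s (p i) * 4 ^ (2 * (s i - 1))) : ℕ)) : ℝ)
      = (A.card : ℝ) * ((2 * 4 ^ (2 * (s r - 1)) * ∏ i ∈ E, ((2:ℝ) * 4 ^ (2 * (s i - 1)))) *
          ∏ i ∈ E, ((s (p i) : ℝ))) := by
        push_cast
        rw [hsplit]
        ring
    _ ≤ (A.card : ℝ) * (((32 / 3 * 4 ^ (4 * s r)) * ∏ i ∈ E, ((32:ℝ) / 3 * 4 ^ (4 * s i))) *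
          ∏ j, (s j : ℝ) ^ (𝒯.neighborSet j).ncard) := by
        refine mul_le_mul_of_nonneg_left ?_ (by positivity)
        refine mul_le_mul ?_ hA (Finset.prod_nonneg fun i _ => by positivity) (by positivity)
        refine mul_le_mul (hBnum (s r)) (Finset.prod_le_prod (fun i _ => by positivity)
          (fun i _ => hBnum (s i))) (Finset.prod_nonneg fun i _ => by positivity) (by positivity)
    _ = (A.card : ℝ) * ∏ i, (32 / 3 * 4 ^ (4 * s i) * (s i : ℝ) ^ (𝒯.neighborSet i).ncard) := by
        conv_rhs => rw [Finset.prod_mul_distrib, ← Finset.mul_prod_erase Finset.univ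
          (fun i => (32:ℝ) / 3 * 4 ^ (4 * s i)) (Finset.mem_univ r)]

lemma main_count {n : ℕ} (hn : 1 ≤ n) (Λ F : Finset Site) (𝒯 : SimpleGraph (Fin n))
    (hconn : 𝒯.Connected) (s : Fin n → ℕ) (hs : ∀ i, 2 ≤ s i)
    (dd : Fin n → Fin n → ℕ) (A : Finset Site) (dA : ℕ) :
    {SS : Fin n → Finset Site | PSfam Λ F SS ∧ hDistEq (SS ⟨0, hn⟩) A dA ∧
        (∀ i, (SS i).card = s i) ∧
        ∀ i j, 𝒯.Adj i j → hDistEq (SS i) (SS j) (dd i j)}.Finite ∧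
    ({SS : Fin n → Finset Site | PSfam Λ F SS ∧ hDistEq (SS ⟨0, hn⟩) A dA ∧
        (∀ i, (SS i).card = s i) ∧
        ∀ i j, 𝒯.Adj i j → hDistEq (SS i) (SS j) (dd i j)}.ncard : ℝ) ≤
      (A.card : ℝ) *
        ∏ i, (32 / 3 * 4 ^ (4 * s i) * (s i : ℝ) ^ (𝒯.neighborSet i).ncard) := by
  classical
  set r : Fin n := ⟨0, hn⟩ with hr
  choose p hp using exists_parent hconn r
  set T := {SS : Fin n → Finset Site | PSfam Λ F SS ∧ hDistEq (SS r) A dA ∧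
      (∀ i, (SS i).card = s i) ∧
      ∀ i j, 𝒯.Adj i j → hDistEq (SS i) (SS j) (dd i j)} with hT
  set Dec : Code s p A r → (Fin n → Finset Site) :=
    fun c i => dec s p dd A dA r c (𝒯.dist r i) i with hDec
  have hsub : T ⊆ Set.range Dec := by
    rintro SS ⟨h1, h2, h3, h4⟩
    obtain ⟨a, haS, y, hyA, hav, hd⟩ := h2.1
    obtain ⟨b0, hb0⟩ := shift_exists y a dA hav hd
    obtain ⟨k0, hk0, hpk0⟩ := pick_exists A y hyA
    obtain ⟨l0, hl0len, hl0⟩ := tour (SS r) (h1.1 r).2.2.1 a haS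
    obtain ⟨w0, hw0⟩ := exists_fn_of_list (2 * (s r - 1)) l0 (by rw [hl0len, h3 r])
    have hchild : ∀ i : {i : Fin n // i ≠ r},
        ∃ (b : Bool) (k : ℕ), ∃ w : Fin (2 * (s i.1 - 1)) → Fin 4,
        k < s (p i.1) ∧
          trajFin (shiftPt (pick (SS (p i.1)) k) b (dd (p i.1) i.1)) w = SS i.1 := by
      rintro ⟨i, hir⟩
      have hadj := (hp i hir).1
      obtain ⟨a', ha'S, y', hy'S, h2', hd'⟩ := (h4 (p i) i hadj).1
      obtain ⟨b, hb⟩ := shift_exists a' y' (dd (p i) i) h2'.symm (by omega)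
      obtain ⟨k, hk, hpk⟩ := pick_exists (SS (p i)) a' ha'S
      obtain ⟨l, hllen, hl⟩ := tour (SS i) (h1.1 i).2.2.1 y' hy'S
      obtain ⟨w, hw⟩ := exists_fn_of_list (2 * (s i - 1)) l (by rw [hllen, h3 i])
      exact ⟨b, k, w, by rwa [h3 (p i)] at hk,
        by rw [trajFin, hw, hpk, hb, hl]⟩
    choose bb kk ww hkk hcc using hchild
    set c : Code s p A r :=
      (⟨b0, ⟨k0, hk0⟩, w0⟩, fun i => ⟨bb i, ⟨kk i, hkk i⟩, ww i⟩) with hc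
    have key : ∀ m (i : Fin n), 𝒯.dist r i = m → dec s p dd A dA r c m i = SS i := by
      intro m
      induction m with
      | zero =>
        intro i hi
        have hir : i = r := by
          by_contra hir
          exact (SimpleGraph.dist_ne_zero_iff_ne_and_reachable.mpr
            ⟨fun hh => hir hh.symm, hconn r i⟩) hi
        rw [hir]
        show trajFin (shiftPt (pick A ((⟨k0, hk0⟩ : Fin A.card) : ℕ)) b0 dA) w0 = SS r
        rw [trajFin, hw0]
        show (traj (shiftPt (pick A k0) b0 dA) l0).toFinset = SS r
        rw [hpk0, hb0, hl0]
      | succ m ih =>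
        intro i hi
        have hir : i ≠ r := by
          rintro rfl
          rw [SimpleGraph.dist_self] at hi
          omega
        have hpd : 𝒯.dist r (p i) = m := by
          have := (hp i hir).2
          omega
        show dec s p dd A dA r c (m + 1) i = SS i
        rw [dec, dif_neg hir, ih (p i) hpd]
        exact hcc ⟨i, hir⟩
    exact ⟨c, funext fun i => key (𝒯.dist r i) i rfl⟩
  have hfin : T.Finite := Set.Finite.subset (Set.finite_range Dec) hsub
  refine ⟨hfin, ?_⟩
  have hcount : T.ncard ≤ Fintype.card (Code s p A r) := by
    refine le_trans (Set.ncard_le_ncard hsub (Set.finite_range Dec)) ?_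
    rw [← Set.image_univ]
    refine le_trans (Set.ncard_image_le Set.finite_univ) ?_
    rw [Set.ncard_univ, Nat.card_eq_fintype_card]
  calc (T.ncard : ℝ) ≤ ((Fintype.card (Code s p A r) : ℕ) : ℝ) := by exact_mod_cast hcount
    _ = (((2 * A.card * 4 ^ (2 * (s r - 1))) *
        ∏ i ∈ Finset.univ.erase r, (2 * s (p i) * 4 ^ (2 * (s i - 1))) : ℕ) : ℝ) := by
        rw [cardCode]
    _ ≤ _ := finalIneq 𝒯 s hs p r (fun i hir => (hp i hir).1) A

end TIE

/-- **Lemma 4 (tree-indexed entropy bound for families of regions).**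
Let `n ≥ 1`, let `𝒯` be a tree on `{1,…,n}`, `s_i ≥ 2`, `d_{ij} ≥ 2` on the
edges of `𝒯`. Then (a) for every finite `A ⊂ ℤ²` and `1 ≤ d < ∞`, the number
of families `(S_i) ∈ 𝒫𝒮_Λ` with `dist_h(S_1,A) = d`, `|S_i| = s_i` and
`dist_h(S_i,S_j) = d_{ij}` on the edges of `𝒯` is at most
`|A|·∏_i (32/3)·4^{4s_i}·s_i^{deg_𝒯(i)}`; and (b) for every `x ∈ ℤ²`, the
number of such families with `S_1 ∋ x` instead is at most
`∏_i (32/3)·4^{4s_i}·s_i^{deg_𝒯(i)}`. -/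
theorem tree_indexed_entropy (n : ℕ) (hn : 1 ≤ n) (Λ F : Finset Site)
    (𝒯 : SimpleGraph (Fin n)) (h𝒯 : 𝒯.IsTree)
    (s : Fin n → ℕ) (hs : ∀ i, 2 ≤ s i)
    (dd : Fin n → Fin n → ℕ) (hdd : ∀ i j, 𝒯.Adj i j → 2 ≤ dd i j) :
    (∀ (A : Finset Site) (dA : ℕ), 1 ≤ dA →
      {SS : Fin n → Finset Site | PSfam Λ F SS ∧
          hDistEq (SS ⟨0, hn⟩) A dA ∧ (∀ i, (SS i).card = s i) ∧
          ∀ i j, 𝒯.Adj i j → hDistEq (SS i) (SS j) (dd i j)}.Finite ∧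
      ({SS : Fin n → Finset Site | PSfam Λ F SS ∧
          hDistEq (SS ⟨0, hn⟩) A dA ∧ (∀ i, (SS i).card = s i) ∧
          ∀ i j, 𝒯.Adj i j → hDistEq (SS i) (SS j) (dd i j)}.ncard : ℝ) ≤
        (A.card : ℝ) *
          ∏ i, (32 / 3 * 4 ^ (4 * s i) *
            (s i : ℝ) ^ (𝒯.neighborSet i).ncard)) ∧
    (∀ x : Site,
      {SS : Fin n → Finset Site | PSfam Λ F SS ∧
          x ∈ SS ⟨0, hn⟩ ∧ (∀ i, (SS i).card = s i) ∧
          ∀ i j, 𝒯.Adj i j → hDistEq (SS i) (SS j) (dd i j)}.Finite ∧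
      ({SS : Fin n → Finset Site | PSfam Λ F SS ∧
          x ∈ SS ⟨0, hn⟩ ∧ (∀ i, (SS i).card = s i) ∧
          ∀ i j, 𝒯.Adj i j → hDistEq (SS i) (SS j) (dd i j)}.ncard : ℝ) ≤
        ∏ i, (32 / 3 * 4 ^ (4 * s i) *
          (s i : ℝ) ^ (𝒯.neighborSet i).ncard)) := by
  classical
  have hconn := h𝒯.isConnected
  constructor
  · intro A dA _
    exact TIE.main_count hn Λ F 𝒯 hconn s hs dd A dA
  · intro x
    have hmain := TIE.main_count hn Λ F 𝒯 hconn s hs dd {x} 0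
    have hsub : {SS : Fin n → Finset Site | PSfam Λ F SS ∧
          x ∈ SS ⟨0, hn⟩ ∧ (∀ i, (SS i).card = s i) ∧
          ∀ i j, 𝒯.Adj i j → hDistEq (SS i) (SS j) (dd i j)} ⊆
        {SS : Fin n → Finset Site | PSfam Λ F SS ∧
          hDistEq (SS ⟨0, hn⟩) ({x} : Finset Site) 0 ∧ (∀ i, (SS i).card = s i) ∧
          ∀ i j, 𝒯.Adj i j → hDistEq (SS i) (SS j) (dd i j)} := by
      rintro SS ⟨h1, h2, h3, h4⟩
      refine ⟨h1, ⟨⟨x, h2, x, Finset.mem_singleton_self x, rfl, by simp⟩,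
        fun a _ y _ _ => Nat.zero_le _⟩, h3, h4⟩
    refine ⟨hmain.1.subset hsub, ?_⟩
    refine le_trans ?_ (le_trans hmain.2 ?_)
    · exact_mod_cast Nat.cast_le.mpr (Set.ncard_le_ncard hsub hmain.1)
    · simp
end
end

section
/- Diagonalizability of the transfer matrix (Proposition A.2, first part, with the footnoted discriminant claim): For all real a, b with 0 ≤ a, b ≤ 1 and (a,b) ≠ (1,0), the characteristic polynomial p(λ) = det(λI − T) = −ab + (λ − a)(λ² − 1) of the transfer matrix T = ((0, 1, √(ab)), (1, 0, 0), (0, √(ab), a)) has three distinct real roots; equivalently its discriminant Δ = 18a(1−b) + 4a²(1−b) + a² + 4 − 27a²(1−b)² is strictly positive. In particular, for every β > 0 (with J > 0 and μ_h + J > 0, so that a = e^{−β(μ_h+J)/2} ∈ (0,1) and b = e^{−βJ} ∈ (0,1)), T is diagonalizable over ℝ. -/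
open scoped BigOperators

noncomputable section

/-- The transfer matrix `T = ((0, 1, √(ab)), (1, 0, 0), (0, √(ab), a))`. -/
def Tmat (a b : ℝ) : Matrix (Fin 3) (Fin 3) ℝ :=
  !![0, 1, Real.sqrt (a * b); 1, 0, 0; 0, Real.sqrt (a * b), a]

/-- A monic cubic with three distinct roots factors completely. -/
lemma cubic_factor (A B C r₁ r₂ r₃ : ℝ) (h12 : r₁ ≠ r₂) (h13 : r₁ ≠ r₃) (h23 : r₂ ≠ r₃)
    (e1 : r₁^3 + A*r₁^2 + B*r₁ + C = 0) (e2 : r₂^3 + A*r₂^2 + B*r₂ + C = 0)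
    (e3 : r₃^3 + A*r₃^2 + B*r₃ + C = 0) (x : ℝ) :
    x^3 + A*x^2 + B*x + C = (x - r₁) * (x - r₂) * (x - r₃) := by
  have k12 : r₁^2 + r₁*r₂ + r₂^2 + A*(r₁+r₂) + B = 0 := by
    apply mul_left_cancel₀ (sub_ne_zero.mpr h12); linear_combination e1 - e2
  have k13 : r₁^2 + r₁*r₃ + r₃^2 + A*(r₁+r₃) + B = 0 := by
    apply mul_left_cancel₀ (sub_ne_zero.mpr h13); linear_combination e1 - e3
  have hA : A = -(r₁+r₂+r₃) := by
    apply mul_left_cancel₀ (sub_ne_zero.mpr h23); linear_combination k12 - k13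
  have hB : B = r₁*r₂ + r₁*r₃ + r₂*r₃ := by linear_combination k12 - (r₁+r₂)*hA
  have hC : C = -(r₁*r₂*r₃) := by linear_combination e1 - r₁^2*hA - r₁*hB
  linear_combination x^2*hA + x*hB + hC

lemma root_iff (r₁ r₂ r₃ x : ℝ) :
    (x - r₁) * (x - r₂) * (x - r₃) = 0 ↔ (x = r₁ ∨ x = r₂ ∨ x = r₃) := by
  rw [mul_eq_zero, mul_eq_zero, sub_eq_zero, sub_eq_zero, sub_eq_zero]; tauto

lemma roots_exist (a b : ℝ) (ha : 0 ≤ a) (ha1 : a ≤ 1) (hb : 0 ≤ b) (hb1 : b ≤ 1)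
    (hne : (a, b) ≠ ((1 : ℝ), (0 : ℝ))) :
    ∃ r₁ r₂ r₃ : ℝ, r₁ ≠ r₂ ∧ r₁ ≠ r₃ ∧ r₂ ≠ r₃ ∧
      ∀ lam : ℝ, (lam - a) * (lam ^ 2 - 1) - a * b = 0 ↔
        (lam = r₁ ∨ lam = r₂ ∨ lam = r₃) := by
  rcases eq_or_lt_of_le ha with ha0 | ha0
  · -- a = 0
    subst ha0
    refine ⟨-1, 0, 1, by norm_num, by norm_num, by norm_num, fun lam => ?_⟩
    rw [show (lam - 0) * (lam ^ 2 - 1) - 0 * b = (lam - (-1)) * (lam - 0) * (lam - 1) by ring,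
      root_iff]
  rcases eq_or_lt_of_le hb with hb0 | hb0
  · -- b = 0
    subst hb0
    have haa : a < 1 := lt_of_le_of_ne ha1 (by rintro rfl; exact hne rfl)
    refine ⟨-1, a, 1, by nlinarith, by norm_num, by nlinarith, fun lam => ?_⟩
    rw [show (lam - a) * (lam ^ 2 - 1) - a * 0 = (lam - (-1)) * (lam - a) * (lam - 1) by ring,
      root_iff]
  rcases eq_or_lt_of_le hb1 with hb1' | hb1'
  · -- b = 1
    subst hb1'
    set s := Real.sqrt (a^2 + 4) with hs
    have hs2 : s^2 = a^2 + 4 := Real.sq_sqrt (by positivity)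
    have hsgt : a < s := by nlinarith [Real.sqrt_nonneg (a^2+4), hs2]
    refine ⟨(a - s)/2, 0, (a + s)/2, by nlinarith, by nlinarith, by nlinarith, fun lam => ?_⟩
    rw [show (lam - a) * (lam ^ 2 - 1) - a * 1 =
        (lam - (a - s)/2) * (lam - 0) * (lam - (a + s)/2) by linear_combination (lam/4) * hs2,
      root_iff]
  · -- generic case: 0 < a, 0 < b < 1, use the intermediate value theorem
    set f : ℝ → ℝ := fun x => (x - a) * (x^2 - 1) - a * b with hf
    have hc : Continuous f := by fun_prop
    have hfm1 : f (-1) < 0 := by simp only [hf]; nlinarith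
    have hf0 : 0 < f 0 := by simp only [hf]; nlinarith
    have hf1 : f 1 < 0 := by simp only [hf]; nlinarith
    have hf3 : 0 < f 3 := by simp only [hf]; nlinarith
    obtain ⟨r₁, hr₁m, hr₁⟩ := intermediate_value_Ioo (by norm_num : (-1:ℝ) ≤ 0)
      hc.continuousOn (Set.mem_Ioo.mpr ⟨hfm1, hf0⟩)
    obtain ⟨r₂, hr₂m, hr₂⟩ := intermediate_value_Ioo' (by norm_num : (0:ℝ) ≤ 1)
      hc.continuousOn (Set.mem_Ioo.mpr ⟨hf1, hf0⟩)
    obtain ⟨r₃, hr₃m, hr₃⟩ := intermediate_value_Ioo (by norm_num : (1:ℝ) ≤ 3)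
      hc.continuousOn (Set.mem_Ioo.mpr ⟨hf1, hf3⟩)
    obtain ⟨hr₁l, hr₁u⟩ := hr₁m; obtain ⟨hr₂l, hr₂u⟩ := hr₂m; obtain ⟨hr₃l, hr₃u⟩ := hr₃m
    simp only [hf] at hr₁ hr₂ hr₃
    have h12 : r₁ ≠ r₂ := ne_of_lt (by linarith)
    have h13 : r₁ ≠ r₃ := ne_of_lt (by linarith)
    have h23 : r₂ ≠ r₃ := ne_of_lt (by linarith)
    have e1 : r₁^3 + (-a)*r₁^2 + (-1)*r₁ + (a - a*b) = 0 := by linear_combination hr₁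
    have e2 : r₂^3 + (-a)*r₂^2 + (-1)*r₂ + (a - a*b) = 0 := by linear_combination hr₂
    have e3 : r₃^3 + (-a)*r₃^2 + (-1)*r₃ + (a - a*b) = 0 := by linear_combination hr₃
    refine ⟨r₁, r₂, r₃, h12, h13, h23, fun lam => ?_⟩
    rw [show (lam - a) * (lam ^ 2 - 1) - a * b = (lam - r₁) * (lam - r₂) * (lam - r₃) by
      linear_combination cubic_factor (-a) (-1) (a - a*b) r₁ r₂ r₃ h12 h13 h23 e1 e2 e3 lam,
      root_iff]

lemma disc_pos (a b : ℝ) (ha : 0 ≤ a) (ha1 : a ≤ 1) (hb : 0 ≤ b) (hb1 : b ≤ 1)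
    (hne : (a, b) ≠ ((1 : ℝ), (0 : ℝ))) :
    0 < 18 * a * (1 - b) + 4 * a ^ 2 * (1 - b) + a ^ 2 + 4 -
        27 * a ^ 2 * (1 - b) ^ 2 := by
  have key : 18 * a * (1 - b) + 4 * a ^ 2 * (1 - b) + a ^ 2 + 4 -
      27 * a ^ 2 * (1 - b) ^ 2 =
      b * (4 + a^2) + (1 - b) * (1 - a) * (22*a + 4) + 27 * a^2 * (1 - b) * b := by ring
  rw [key]
  rcases eq_or_lt_of_le hb with hb0 | hb0
  · subst hb0
    have haa : a < 1 := lt_of_le_of_ne ha1 (by rintro rfl; exact hne rfl)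
    nlinarith
  · nlinarith [mul_nonneg (mul_nonneg (by linarith : (0:ℝ) ≤ 1 - b)
      (by linarith : (0:ℝ) ≤ 1 - a)) (by linarith : (0:ℝ) ≤ 22*a+4),
      mul_nonneg (mul_nonneg (by positivity : (0:ℝ) ≤ 27*a^2)
      (by linarith : (0:ℝ) ≤ 1-b)) hb]

lemma diag_of_roots (a b r₁ r₂ r₃ : ℝ) (ha0 : 0 < a) (ha1 : a < 1) (hb0 : 0 < b) (hb1 : b < 1)
    (h12 : r₁ ≠ r₂) (h13 : r₁ ≠ r₃) (h23 : r₂ ≠ r₃)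
    (hroot : ∀ lam : ℝ, (lam - a) * (lam ^ 2 - 1) - a * b = 0 ↔
      (lam = r₁ ∨ lam = r₂ ∨ lam = r₃)) :
    ∃ P D : Matrix (Fin 3) (Fin 3) ℝ, IsUnit P.det ∧ D.IsDiag ∧
      Tmat a b = P * D * P⁻¹ := by
  have e1 : (r₁ - a) * (r₁ ^ 2 - 1) = a * b := by
    have := (hroot r₁).mpr (Or.inl rfl); linarith
  have e2 : (r₂ - a) * (r₂ ^ 2 - 1) = a * b := by
    have := (hroot r₂).mpr (Or.inr (Or.inl rfl)); linarith
  have e3 : (r₃ - a) * (r₃ ^ 2 - 1) = a * b := by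
    have := (hroot r₃).mpr (Or.inr (Or.inr rfl)); linarith
  have hab : 0 < a * b := mul_pos ha0 hb0
  have hna1 : r₁ - a ≠ 0 := by intro h; rw [h] at e1; nlinarith
  have hna2 : r₂ - a ≠ 0 := by intro h; rw [h] at e2; nlinarith
  have hna3 : r₃ - a ≠ 0 := by intro h; rw [h] at e3; nlinarith
  set c := Real.sqrt (a * b) with hc
  have hc2 : c ^ 2 = a * b := Real.sq_sqrt hab.le
  have hc0 : c ≠ 0 := by positivity
  set P : Matrix (Fin 3) (Fin 3) ℝ :=
    !![r₁, r₂, r₃; 1, 1, 1; c/(r₁ - a), c/(r₂ - a), c/(r₃ - a)] with hP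
  set D : Matrix (Fin 3) (Fin 3) ℝ := Matrix.diagonal ![r₁, r₂, r₃] with hD
  have hdet : P.det = c * (r₁ - r₂) * (r₂ - r₃) * (r₁ - r₃) /
      ((r₁ - a) * (r₂ - a) * (r₃ - a)) := by
    rw [hP]
    simp [Matrix.det_fin_three]
    field_simp
    ring
  have hdetne : P.det ≠ 0 := by
    rw [hdet]
    apply div_ne_zero
    · exact mul_ne_zero (mul_ne_zero (mul_ne_zero hc0 (sub_ne_zero.mpr h12))
        (sub_ne_zero.mpr h23)) (sub_ne_zero.mpr h13)
    · exact mul_ne_zero (mul_ne_zero hna1 hna2) hna3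
  have hunit : IsUnit P.det := isUnit_iff_ne_zero.mpr hdetne
  have hcc : Real.sqrt a * Real.sqrt b = c := by rw [hc, Real.sqrt_mul ha0.le]
  clear_value c P D
  have hTP : Tmat a b * P = P * D := by
    ext i j
    fin_cases i <;> fin_cases j <;>
      simp [Tmat, hP, hD, Matrix.mul_apply, Fin.sum_univ_three, Matrix.diagonal]
    all_goals field_simp
    · linear_combination c*hcc + hc2 - e1 - c*hc - c*hcc
    · linear_combination c*hcc + hc2 - e2 - c*hc - c*hcc
    · linear_combination c*hcc + hc2 - e3 - c*hc - c*hcc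
    · linear_combination (r₁ - a) * hcc - (r₁ - a) * (hc + hcc)
    · linear_combination (r₂ - a) * hcc - (r₂ - a) * (hc + hcc)
    · linear_combination (r₃ - a) * hcc - (r₃ - a) * (hc + hcc)
  refine ⟨P, D, hunit, by rw [hD]; exact Matrix.isDiag_diagonal _, ?_⟩
  calc Tmat a b = Tmat a b * (P * P⁻¹) := by rw [Matrix.mul_nonsing_inv P hunit, mul_one]
    _ = (Tmat a b * P) * P⁻¹ := by rw [Matrix.mul_assoc]
    _ = P * D * P⁻¹ := by rw [hTP]

/-- **Proposition A.2, first part (diagonalizability of the transfer matrix),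
with the footnoted discriminant claim.** For all `a, b ∈ [0,1]` with
`(a,b) ≠ (1,0)`, the characteristic polynomial
`p(λ) = det(λI − T) = (λ−a)(λ²−1) − ab` has three distinct real roots;
equivalently, the discriminant `Δ = 18a(1−b) + 4a²(1−b) + a² + 4 − 27a²(1−b)²`
is strictly positive. In particular, for every `β > 0` (with `J > 0` and
`μ_h + J > 0`, so that `a = e^{−β(μ_h+J)/2} ∈ (0,1)` and `b = e^{−βJ} ∈ (0,1)`)
the matrix `T` is diagonalizable over `ℝ`. -/
theorem transfer_matrix_diagonalizable :
    (∀ a b : ℝ, 0 ≤ a → a ≤ 1 → 0 ≤ b → b ≤ 1 → (a, b) ≠ ((1 : ℝ), (0 : ℝ)) →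
      (∀ lam : ℝ,
          Matrix.det (lam • (1 : Matrix (Fin 3) (Fin 3) ℝ) - Tmat a b) =
            (lam - a) * (lam ^ 2 - 1) - a * b) ∧
      (0 < 18 * a * (1 - b) + 4 * a ^ 2 * (1 - b) + a ^ 2 + 4 -
            27 * a ^ 2 * (1 - b) ^ 2) ∧
      (∃ r₁ r₂ r₃ : ℝ, r₁ ≠ r₂ ∧ r₁ ≠ r₃ ∧ r₂ ≠ r₃ ∧
        ∀ lam : ℝ, (lam - a) * (lam ^ 2 - 1) - a * b = 0 ↔
          (lam = r₁ ∨ lam = r₂ ∨ lam = r₃))) ∧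
    (∀ β J μh : ℝ, 0 < β → 0 < J → 0 < μh + J →
      ∃ P D : Matrix (Fin 3) (Fin 3) ℝ, IsUnit P.det ∧ D.IsDiag ∧
        Tmat (Real.exp (-(β * (μh + J) / 2))) (Real.exp (-(β * J))) =
          P * D * P⁻¹) := by
  constructor
  · intro a b ha ha1 hb hb1 hne
    refine ⟨fun lam => ?_, disc_pos a b ha ha1 hb hb1 hne,
      roots_exist a b ha ha1 hb hb1 hne⟩
    have hs : Real.sqrt (a*b) * Real.sqrt (a*b) = a*b :=
      Real.mul_self_sqrt (mul_nonneg ha hb)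
    simp [Matrix.det_fin_three, Tmat, Matrix.smul_apply, Matrix.sub_apply, Matrix.one_apply]
    linear_combination -hs
  · intro β J μh hβ hJ hμ
    set a := Real.exp (-(β * (μh + J) / 2)) with haa
    set b := Real.exp (-(β * J)) with hbb
    have ha0 : 0 < a := Real.exp_pos _
    have hb0 : 0 < b := Real.exp_pos _
    have ha1 : a < 1 := by
      rw [haa, Real.exp_lt_one_iff]
      have : 0 < β * (μh + J) := mul_pos hβ hμ
      linarith
    have hb1 : b < 1 := by
      rw [hbb, Real.exp_lt_one_iff]
      have : 0 < β * J := mul_pos hβ hJ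
      linarith
    obtain ⟨r₁, r₂, r₃, h12, h13, h23, hroot⟩ :=
      roots_exist a b ha0.le ha1.le hb0.le hb1.le
        (by intro h; rw [Prod.mk.injEq] at h; exact absurd h.2 hb0.ne')
    exact diag_of_roots a b r₁ r₂ r₃ ha0 ha1 hb0 hb1 h12 h13 h23 hroot
end
end

section
/- Eigenvalue asymptotics of the transfer matrix (Proposition A.2, second part): Fix J > 0 and μ_h with μ_h + J > 0, and set a = a(β) = e^{−β(μ_h+J)/2}, b = b(β) = e^{−βJ}. Let λ₁(β) > λ₃(β) > λ₂(β) denote the three (distinct, real) eigenvalues of T ordered so that λ₁ → 1, λ₂ → −1, λ₃ → 0 as β → ∞. Then as β → ∞: (λ₁ − 1)/(ab) → 1/2, (λ₂ + 1)/(ab) → 1/2, and (λ₃ − a + ab)/(a³b) → −1; i.e. λ₁ = 1 + (ab/2)(1+o(1)), λ₂ = −1 + (ab/2)(1+o(1)), λ₃ = a − ab − a³b·(1+o(1)). -/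
open Filter

noncomputable section

/-- `a(β) = e^{−β(μ_h+J)/2}`. -/
def aOf (β μh J : ℝ) : ℝ := Real.exp (-(β * (μh + J) / 2))

/-- `b(β) = e^{−βJ}`. -/
def bOf (β J : ℝ) : ℝ := Real.exp (-(β * J))

/-- `λ` is a root of the characteristic polynomial
`p(λ) = (λ−a)(λ²−1) − ab` of the transfer matrix. -/
def IsCharRoot (a b lam : ℝ) : Prop := (lam - a) * (lam ^ 2 - 1) - a * b = 0

lemma cubic_factorization (a b l1 l2 l3 : ℝ) (h1 : IsCharRoot a b l1) (h2 : IsCharRoot a b l2)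
    (h3 : IsCharRoot a b l3) (h12 : l1 ≠ l2) (h13 : l1 ≠ l3) (h23 : l2 ≠ l3) (x : ℝ) :
    (x - a) * (x ^ 2 - 1) - a * b = (x - l1) * (x - l2) * (x - l3) := by
  unfold IsCharRoot at h1 h2 h3
  have G12 : l1^2 + l1*l2 + l2^2 - a*(l1+l2) - 1 = 0 := by
    have h : (l1 - l2) * (l1^2 + l1*l2 + l2^2 - a*(l1+l2) - 1) = 0 := by
      linear_combination h1 - h2
    rcases mul_eq_zero.mp h with h' | h'
    · exact absurd (sub_eq_zero.mp h') h12
    · exact h'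
  have G13 : l1^2 + l1*l3 + l3^2 - a*(l1+l3) - 1 = 0 := by
    have h : (l1 - l3) * (l1^2 + l1*l3 + l3^2 - a*(l1+l3) - 1) = 0 := by
      linear_combination h1 - h3
    rcases mul_eq_zero.mp h with h' | h'
    · exact absurd (sub_eq_zero.mp h') h13
    · exact h'
  have E1 : l1 + l2 + l3 = a := by
    have h : (l2 - l3) * (l1 + l2 + l3 - a) = 0 := by linear_combination G12 - G13
    rcases mul_eq_zero.mp h with h' | h'
    · exact absurd (sub_eq_zero.mp h') h23
    · linarith [sub_eq_zero.mp h']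
  have E2 : l1*l2 + l1*l3 + l2*l3 = -1 := by linear_combination (l1+l2)*E1 - G12
  have E3 : l1*l2*l3 = a*b - a := by linear_combination h1 + l1*E2 - l1^2*E1
  linear_combination x^2*E1 - x*E2 + E3

set_option maxHeartbeats 1000000 in
lemma localize (a b l1 l2 l3 ε : ℝ) (ha : 0 < a) (hb : 0 < b) (hε : 0 < ε) (hε2 : ε < 1/2)
    (haε : a < ε/4) (hbε : b < 1/2)
    (h1 : IsCharRoot a b l1) (h2 : IsCharRoot a b l2) (h3 : IsCharRoot a b l3)
    (h23 : l2 < l3) (h31 : l3 < l1) :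
    |l1 - 1| < ε ∧ |l2 + 1| < ε ∧ |l3| < ε := by
  have hfac : ∀ x : ℝ, (x - a) * (x ^ 2 - 1) - a * b = (x - l1) * (x - l2) * (x - l3) :=
    cubic_factorization a b l1 l2 l3 h1 h2 h3 (lt_trans h23 h31).ne'
      h31.ne' h23.ne
  set f : ℝ → ℝ := fun x => (x - a) * (x ^ 2 - 1) - a * b with hf
  have hcont : Continuous f := by fun_prop
  have hab : a * b < ε/8 := by nlinarith
  have s1 : f (-1 - ε) < 0 := by simp only [hf]; nlinarith
  have s2 : 0 < f (-1 + ε) := by simp only [hf]; nlinarith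
  have s3 : 0 < f (-ε) := by simp only [hf]; nlinarith
  have s4 : f ε < 0 := by simp only [hf]; nlinarith
  have s5 : f (1 - ε) < 0 := by simp only [hf]; nlinarith
  have s6 : 0 < f (1 + ε) := by simp only [hf]; nlinarith
  obtain ⟨r1, hr1m, hfr1⟩ := intermediate_value_Ioo (by linarith : (-1 - ε : ℝ) ≤ -1 + ε)
    hcont.continuousOn (Set.mem_Ioo.mpr ⟨s1, s2⟩)
  obtain ⟨r2, hr2m, hfr2⟩ := intermediate_value_Ioo' (by linarith : (-ε : ℝ) ≤ ε)
    hcont.continuousOn (Set.mem_Ioo.mpr ⟨s4, s3⟩)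
  obtain ⟨r3, hr3m, hfr3⟩ := intermediate_value_Ioo (by linarith : (1 - ε : ℝ) ≤ 1 + ε)
    hcont.continuousOn (Set.mem_Ioo.mpr ⟨s5, s6⟩)
  obtain ⟨hr1a, hr1b⟩ := hr1m
  obtain ⟨hr2a, hr2b⟩ := hr2m
  obtain ⟨hr3a, hr3b⟩ := hr3m
  have e1 : (r1 - l1) * (r1 - l2) * (r1 - l3) = 0 := by rw [← hfac]; exact hfr1
  have e2 : (r2 - l1) * (r2 - l2) * (r2 - l3) = 0 := by rw [← hfac]; exact hfr2
  have e3 : (r3 - l1) * (r3 - l2) * (r3 - l3) = 0 := by rw [← hfac]; exact hfr3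
  have c1 : r1 = l1 ∨ r1 = l2 ∨ r1 = l3 := by
    rcases mul_eq_zero.mp e1 with h | h
    · rcases mul_eq_zero.mp h with h | h
      · exact Or.inl (sub_eq_zero.mp h)
      · exact Or.inr (Or.inl (sub_eq_zero.mp h))
    · exact Or.inr (Or.inr (sub_eq_zero.mp h))
  have c2 : r2 = l1 ∨ r2 = l2 ∨ r2 = l3 := by
    rcases mul_eq_zero.mp e2 with h | h
    · rcases mul_eq_zero.mp h with h | h
      · exact Or.inl (sub_eq_zero.mp h)
      · exact Or.inr (Or.inl (sub_eq_zero.mp h))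
    · exact Or.inr (Or.inr (sub_eq_zero.mp h))
  have c3 : r3 = l1 ∨ r3 = l2 ∨ r3 = l3 := by
    rcases mul_eq_zero.mp e3 with h | h
    · rcases mul_eq_zero.mp h with h | h
      · exact Or.inl (sub_eq_zero.mp h)
      · exact Or.inr (Or.inl (sub_eq_zero.mp h))
    · exact Or.inr (Or.inr (sub_eq_zero.mp h))
  rcases c1 with h1' | h1' | h1' <;> rcases c2 with h2' | h2' | h2' <;>
    rcases c3 with h3' | h3' | h3' <;>
    exact ⟨abs_lt.mpr ⟨by linarith, by linarith⟩, abs_lt.mpr ⟨by linarith, by linarith⟩,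
      abs_lt.mpr ⟨by linarith, by linarith⟩⟩

set_option maxHeartbeats 1000000 in
/-- **Proposition A.2, second part (eigenvalue asymptotics of the transfer
matrix).** Fix `J > 0` and `μ_h` with `μ_h + J > 0`. Let
`λ₁(β) > λ₃(β) > λ₂(β)` be the three (distinct, real) eigenvalues of `T`.
Then as `β → ∞`: `λ₁ = 1 + (ab/2)(1+o(1))`, `λ₂ = −1 + (ab/2)(1+o(1))` and
`λ₃ = a − ab − a³b·(1+o(1))`. -/
theorem eigenvalue_asymptotics (J μh : ℝ) (hJ : 0 < J) (hμh : 0 < μh + J)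
    (lam₁ lam₂ lam₃ : ℝ → ℝ)
    (hroots : ∀ β : ℝ, 0 < β →
      IsCharRoot (aOf β μh J) (bOf β J) (lam₁ β) ∧
      IsCharRoot (aOf β μh J) (bOf β J) (lam₂ β) ∧
      IsCharRoot (aOf β μh J) (bOf β J) (lam₃ β) ∧
      lam₂ β < lam₃ β ∧ lam₃ β < lam₁ β) :
    Tendsto (fun β => (lam₁ β - 1) / (aOf β μh J * bOf β J)) atTop
        (nhds (1 / 2)) ∧
    Tendsto (fun β => (lam₂ β + 1) / (aOf β μh J * bOf β J)) atTop
        (nhds (1 / 2)) ∧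
    Tendsto
        (fun β => (lam₃ β - aOf β μh J + aOf β μh J * bOf β J) /
          (aOf β μh J ^ 3 * bOf β J)) atTop (nhds (-1)) := by
  have hApos : ∀ β : ℝ, 0 < aOf β μh J := fun β => Real.exp_pos _
  have hBpos : ∀ β : ℝ, 0 < bOf β J := fun β => Real.exp_pos _
  have hA : Tendsto (fun β => aOf β μh J) atTop (nhds 0) := by
    have h1 : Tendsto (fun β : ℝ => -(β * (μh + J) / 2)) atTop atBot := by
      apply tendsto_neg_atTop_atBot.comp
      have := Tendsto.atTop_mul_const (show (0:ℝ) < (μh+J)/2 by linarith)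
        (tendsto_id (α := ℝ))
      simpa [mul_div_assoc] using this
    unfold aOf
    exact Real.tendsto_exp_atBot.comp h1
  have hB : Tendsto (fun β => bOf β J) atTop (nhds 0) := by
    have h1 : Tendsto (fun β : ℝ => -(β * J)) atTop atBot := by
      apply tendsto_neg_atTop_atBot.comp
      exact Tendsto.atTop_mul_const hJ (tendsto_id (α := ℝ))
    unfold bOf
    exact Real.tendsto_exp_atBot.comp h1
  have hloc : ∀ ε : ℝ, 0 < ε → ε < 1/2 → ∀ᶠ β in atTop,
      |lam₁ β - 1| < ε ∧ |lam₂ β + 1| < ε ∧ |lam₃ β| < ε := by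
    intro ε hε hε2
    have h1 : ∀ᶠ β in atTop, aOf β μh J < ε/4 := hA.eventually_lt_const (by positivity)
    have h2 : ∀ᶠ β in atTop, bOf β J < 1/2 := hB.eventually_lt_const (by norm_num)
    filter_upwards [h1, h2, eventually_gt_atTop 0] with β ha hb hβ
    obtain ⟨hc1, hc2, hc3, ho1, ho2⟩ := hroots β hβ
    exact localize _ _ _ _ _ _ (hApos β) (hBpos β) hε hε2 ha hb hc1 hc2 hc3 ho1 ho2
  have hL1 : Tendsto lam₁ atTop (nhds 1) := by
    rw [Metric.tendsto_nhds]
    intro ε hε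
    have hm : 0 < min ε (1/4) := lt_min hε (by norm_num)
    filter_upwards [hloc _ hm ((min_le_right _ _).trans_lt (by norm_num))] with β h
    rw [Real.dist_eq]
    exact h.1.trans_le (min_le_left _ _)
  have hL2 : Tendsto lam₂ atTop (nhds (-1)) := by
    rw [Metric.tendsto_nhds]
    intro ε hε
    have hm : 0 < min ε (1/4) := lt_min hε (by norm_num)
    filter_upwards [hloc _ hm ((min_le_right _ _).trans_lt (by norm_num))] with β h
    rw [Real.dist_eq]
    have := h.2.1
    calc |lam₂ β - (-1)| = |lam₂ β + 1| := by ring_nf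
    _ < min ε (1/4) := this
    _ ≤ ε := min_le_left _ _
  have hL3 : Tendsto lam₃ atTop (nhds 0) := by
    rw [Metric.tendsto_nhds]
    intro ε hε
    have hm : 0 < min ε (1/4) := lt_min hε (by norm_num)
    filter_upwards [hloc _ hm ((min_le_right _ _).trans_lt (by norm_num))] with β h
    rw [Real.dist_eq, sub_zero]
    exact h.2.2.trans_le (min_le_left _ _)
  refine ⟨?_, ?_, ?_⟩
  · -- part 1
    have hden : Tendsto (fun β => (lam₁ β - aOf β μh J) * (lam₁ β + 1)) atTop (nhds 2) := by
      have h := (hL1.sub hA).mul (hL1.add (tendsto_const_nhds (x := (1:ℝ))))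
      norm_num at h
      exact h
    have key : Tendsto (fun β => 1 / ((lam₁ β - aOf β μh J) * (lam₁ β + 1))) atTop
        (nhds (1/2)) :=
      (tendsto_const_nhds (x := (1:ℝ))).div hden two_ne_zero
    apply key.congr'
    filter_upwards [eventually_gt_atTop 0] with β hβ
    obtain ⟨hc1, -, -, -, -⟩ := hroots β hβ
    set a := aOf β μh J
    set b := bOf β J
    set l := lam₁ β
    have hab : 0 < a * b := mul_pos (hApos β) (hBpos β)
    have hr : (l - a) * (l ^ 2 - 1) = a * b := by
      have := hc1; unfold IsCharRoot at this; linarith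
    have hprod : (l - a) * (l ^ 2 - 1) ≠ 0 := by rw [hr]; exact hab.ne'
    have hla : l - a ≠ 0 := left_ne_zero_of_mul hprod
    have hsq : l ^ 2 - 1 ≠ 0 := right_ne_zero_of_mul hprod
    have hl1 : l - 1 ≠ 0 := by
      intro h; apply hsq; rw [show l = 1 by linarith [sub_eq_zero.mp h]]; ring
    have hlp1 : l + 1 ≠ 0 := by
      intro h; apply hsq; rw [show l = -1 by linarith]; ring
    rw [div_eq_div_iff (mul_ne_zero hla hlp1) hab.ne']
    have := hc1; unfold IsCharRoot at this
    linear_combination -this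
  · -- part 2
    have hden : Tendsto (fun β => (lam₂ β - aOf β μh J) * (lam₂ β - 1)) atTop (nhds 2) := by
      have h := (hL2.sub hA).mul (hL2.sub (tendsto_const_nhds (x := (1:ℝ))))
      norm_num at h
      exact h
    have key : Tendsto (fun β => 1 / ((lam₂ β - aOf β μh J) * (lam₂ β - 1))) atTop
        (nhds (1/2)) :=
      (tendsto_const_nhds (x := (1:ℝ))).div hden two_ne_zero
    apply key.congr'
    filter_upwards [eventually_gt_atTop 0] with β hβ
    obtain ⟨-, hc2, -, -, -⟩ := hroots β hβ
    set a := aOf β μh J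
    set b := bOf β J
    set l := lam₂ β
    have hab : 0 < a * b := mul_pos (hApos β) (hBpos β)
    have hr : (l - a) * (l ^ 2 - 1) = a * b := by
      have := hc2; unfold IsCharRoot at this; linarith
    have hprod : (l - a) * (l ^ 2 - 1) ≠ 0 := by rw [hr]; exact hab.ne'
    have hla : l - a ≠ 0 := left_ne_zero_of_mul hprod
    have hsq : l ^ 2 - 1 ≠ 0 := right_ne_zero_of_mul hprod
    have hl1 : l - 1 ≠ 0 := by
      intro h; apply hsq; rw [show l = 1 by linarith [sub_eq_zero.mp h]]; ring
    rw [div_eq_div_iff (mul_ne_zero hla hl1) hab.ne']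
    have := hc2; unfold IsCharRoot at this
    linear_combination -this
  · -- part 3
    have hU : Tendsto (fun β => lam₃ β ^ 2 - 1) atTop (nhds (-1)) := by
      have h := (hL3.mul hL3).sub (tendsto_const_nhds (x := (1:ℝ)))
      norm_num at h
      convert h using 2 with β
      · ring
    have hV : Tendsto (fun β => lam₃ β / aOf β μh J) atTop (nhds 1) := by
      have hBV : Tendsto (fun β => bOf β J / (lam₃ β ^ 2 - 1)) atTop (nhds 0) := by
        have h := hB.div hU (by norm_num : (-1:ℝ) ≠ 0)
        rw [zero_div] at h
        exact h
      have h : Tendsto (fun β => 1 + bOf β J / (lam₃ β ^ 2 - 1)) atTop (nhds 1) := by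
        simpa using (tendsto_const_nhds (x := (1:ℝ))).add hBV
      apply h.congr'
      filter_upwards [eventually_gt_atTop 0] with β hβ
      obtain ⟨-, -, hc3, -, -⟩ := hroots β hβ
      set a := aOf β μh J
      set b := bOf β J
      set l := lam₃ β
      have hab : 0 < a * b := mul_pos (hApos β) (hBpos β)
      have hr : (l - a) * (l ^ 2 - 1) = a * b := by
        have := hc3; unfold IsCharRoot at this; linarith
      have hprod : (l - a) * (l ^ 2 - 1) ≠ 0 := by rw [hr]; exact hab.ne'
      have hsq : l ^ 2 - 1 ≠ 0 := right_ne_zero_of_mul hprod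
      have hane : a ≠ 0 := (hApos β).ne'
      field_simp
      have := hc3; unfold IsCharRoot at this
      linear_combination -this
    have key : Tendsto (fun β => (lam₃ β / aOf β μh J) ^ 2 / (lam₃ β ^ 2 - 1)) atTop
        (nhds (-1)) := by
      have h := (hV.pow 2).div hU (by norm_num : (-1:ℝ) ≠ 0)
      norm_num at h
      exact h
    apply key.congr'
    filter_upwards [eventually_gt_atTop 0] with β hβ
    obtain ⟨-, -, hc3, -, -⟩ := hroots β hβ
    set a := aOf β μh J
    set b := bOf β J
    set l := lam₃ β
    have hab : 0 < a * b := mul_pos (hApos β) (hBpos β)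
    have hr : (l - a) * (l ^ 2 - 1) = a * b := by
      have := hc3; unfold IsCharRoot at this; linarith
    have hprod : (l - a) * (l ^ 2 - 1) ≠ 0 := by rw [hr]; exact hab.ne'
    have hsq : l ^ 2 - 1 ≠ 0 := right_ne_zero_of_mul hprod
    have hane : a ≠ 0 := (hApos β).ne'
    have hbne : b ≠ 0 := (hBpos β).ne'
    field_simp
    have := hc3; unfold IsCharRoot at this
    linear_combination -this
end
end

section
/- Eigenvalue ratios and the mass gap (Lemma A.1): Fix J > 0 and μ_h with μ_h + J > 0, and set a = e^{−β(μ_h+J)/2}, b = e^{−βJ}. With the eigenvalues λ₁, λ₂, λ₃ of the transfer matrix T as in Proposition A.2, as β → ∞ one has λ₂/λ₁ = −1 + ab(1+o(1)) and λ₃/λ₂ = −a + ab(1+o(1)), i.e. ((λ₂/λ₁) + 1)/(ab) → 1 and ((λ₃/λ₂) + a)/(ab) → 1. Moreover, setting m := −log|λ₂/λ₁|, one has e^{−m} = 1 − e^{−β(μ_h+3J)/2}(1+o(1)), i.e. (1 − e^{−m})/e^{−β(μ_h+3J)/2} → 1 as β → ∞ (note ab = e^{−β(μ_h+3J)/2}).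 -/
open Filter

noncomputable section

set_option maxHeartbeats 800000

private lemma cubic_factor_s18 (a c l1 l2 l3 : ℝ)
    (h23 : l2 < l3) (h31 : l3 < l1)
    (e1 : l1 ^ 3 - a * l1 ^ 2 - l1 + c = 0)
    (e2 : l2 ^ 3 - a * l2 ^ 2 - l2 + c = 0)
    (e3 : l3 ^ 3 - a * l3 ^ 2 - l3 + c = 0) (x : ℝ) :
    x ^ 3 - a * x ^ 2 - x + c = (x - l1) * (x - l2) * (x - l3) := by
  have h12 : l1 - l2 ≠ 0 := sub_ne_zero.mpr (by linarith)
  have h23' : l2 - l3 ≠ 0 := sub_ne_zero.mpr (by linarith)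
  have h13 : l1 - l3 ≠ 0 := sub_ne_zero.mpr (by linarith)
  have q12 : l1 ^ 2 + l1 * l2 + l2 ^ 2 - a * (l1 + l2) - 1 = 0 := by
    have h : (l1 - l2) * (l1 ^ 2 + l1 * l2 + l2 ^ 2 - a * (l1 + l2) - 1) = 0 := by
      linear_combination e1 - e2
    exact (mul_eq_zero.mp h).resolve_left h12
  have q23 : l2 ^ 2 + l2 * l3 + l3 ^ 2 - a * (l2 + l3) - 1 = 0 := by
    have h : (l2 - l3) * (l2 ^ 2 + l2 * l3 + l3 ^ 2 - a * (l2 + l3) - 1) = 0 := by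
      linear_combination e2 - e3
    exact (mul_eq_zero.mp h).resolve_left h23'
  have hs : l1 + l2 + l3 = a := by
    have h : (l1 - l3) * (l1 + l2 + l3 - a) = 0 := by linear_combination q12 - q23
    have := (mul_eq_zero.mp h).resolve_left h13
    linarith
  have hp : l1 * l2 + l1 * l3 + l2 * l3 = -1 := by
    linear_combination (l1 + l2) * hs - q12
  have hq : l1 * l2 * l3 = -c := by
    linear_combination e1 - l1 ^ 2 * hs + l1 * hp
  linear_combination x ^ 2 * hs - x * hp + hq

private lemma root_bounds (a b l1 l2 l3 : ℝ) (ha : 0 < a) (ha2 : a < 1/2)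
    (hb : 0 < b) (hab : a * b < 1/16)
    (hr1 : (l1 - a) * (l1 ^ 2 - 1) - a * b = 0)
    (hr2 : (l2 - a) * (l2 ^ 2 - 1) - a * b = 0)
    (hr3 : (l3 - a) * (l3 ^ 2 - 1) - a * b = 0)
    (h23 : l2 < l3) (h31 : l3 < l1) :
    (-1 < l2 ∧ l2 < -1 + Real.sqrt (a * b)) ∧
    (a - Real.sqrt (a * b) < l3 ∧ l3 < a + Real.sqrt (a * b)) ∧
    (1 < l1 ∧ l1 < 1 + Real.sqrt (a * b)) := by
  have habpos : 0 < a * b := mul_pos ha hb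
  set s := Real.sqrt (a * b) with hsdef
  have hspos : 0 < s := Real.sqrt_pos.mpr habpos
  have hs2 : s ^ 2 = a * b := Real.sq_sqrt habpos.le
  have hslt : s < 1/4 := by nlinarith [hs2, sq_nonneg (s - 1/4)]
  have e1 : l1 ^ 3 - a * l1 ^ 2 - l1 + (a - a * b) = 0 := by linear_combination hr1
  have e2 : l2 ^ 3 - a * l2 ^ 2 - l2 + (a - a * b) = 0 := by linear_combination hr2
  have e3 : l3 ^ 3 - a * l3 ^ 2 - l3 + (a - a * b) = 0 := by linear_combination hr3
  have hfac := cubic_factor_s18 a (a - a * b) l1 l2 l3 h23 h31 e1 e2 e3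
  have h2lb : -1 < l2 := by
    by_contra h; push_neg at h
    have hf1 : l2 - a ≤ 0 := by linarith
    have hf2 : (0:ℝ) ≤ l2 ^ 2 - 1 := by nlinarith
    linarith [mul_nonpos_iff.mpr (Or.inr ⟨hf1, hf2⟩)]
  have h1gt : 1 < l1 := by
    by_contra h; push_neg at h
    have hf := hfac 1
    have hf1 : 0 ≤ 1 - l1 := by linarith
    have hf2 : 0 ≤ 1 - l2 := by linarith
    have hf3 : 0 ≤ 1 - l3 := by linarith
    linarith [mul_nonneg (mul_nonneg hf1 hf2) hf3]
  have inner1 : (0:ℝ) < 2 - 4*s + s^2 + 2*a - a*s := by nlinarith [sq_nonneg s]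
  have hv1 : (0:ℝ) < (-1+s) ^ 3 - a * (-1+s) ^ 2 - (-1+s) + (a - a * b) := by
    linarith [mul_pos hspos inner1, hs2]
  have hq1 : ((-1+s) - l2) * ((-1+s) - l3) < 0 := by
    by_contra h; push_neg at h
    have hf := hfac (-1+s)
    have hx1 : (-1+s) - l1 ≤ 0 := by linarith
    linarith [mul_nonpos_iff.mpr (Or.inr ⟨hx1, h⟩)]
  have h2ub : l2 < -1+s ∧ -1+s < l3 := by
    rcases mul_neg_iff.mp hq1 with ⟨h1', h2'⟩ | ⟨h1', h2'⟩
    · constructor <;> linarith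
    · linarith
  have inner2 : (a+s)^2 - 1 - s < 0 := by nlinarith [sq_nonneg (a+s)]
  have hv2 : (a+s) ^ 3 - a * (a+s) ^ 2 - (a+s) + (a - a * b) < 0 := by
    linarith [mul_neg_of_pos_of_neg hspos inner2, hs2]
  have h3ub : l3 < a + s := by
    by_contra h; push_neg at h
    have hf := hfac (a+s)
    have hf1 : (a+s) - l1 ≤ 0 := by linarith
    have hf2 : 0 ≤ (a+s) - l2 := by linarith [h2ub.1]
    have hf3 : (a+s) - l3 ≤ 0 := by linarith
    have step : ((a+s) - l1) * ((a+s) - l2) ≤ 0 := mul_nonpos_iff.mpr (Or.inr ⟨hf1, hf2⟩)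
    linarith [mul_nonneg_iff.mpr (Or.inr ⟨step, hf3⟩)]
  have inner3 : (0:ℝ) < 1 - (a-s)^2 - s := by nlinarith [sq_nonneg (a-s)]
  have hv3 : (0:ℝ) < (a-s) ^ 3 - a * (a-s) ^ 2 - (a-s) + (a - a * b) := by
    linarith [mul_pos hspos inner3, hs2]
  have h3lb : a - s < l3 := by
    by_contra h; push_neg at h
    have hf := hfac (a-s)
    have hf1 : (a-s) - l1 ≤ 0 := by linarith
    have hf2 : 0 ≤ (a-s) - l2 := by linarith [h2ub.1, hslt]
    have hf3 : 0 ≤ (a-s) - l3 := by linarith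
    have step : ((a-s) - l1) * ((a-s) - l2) ≤ 0 := mul_nonpos_iff.mpr (Or.inr ⟨hf1, hf2⟩)
    linarith [mul_nonpos_iff.mpr (Or.inr ⟨step, hf3⟩)]
  have inner4 : (0:ℝ) < (1+s-a)*(s+2) - s := by nlinarith
  have hv4 : (0:ℝ) < (1+s) ^ 3 - a * (1+s) ^ 2 - (1+s) + (a - a * b) := by
    linarith [mul_pos hspos inner4, hs2]
  have h1ub : l1 < 1 + s := by
    by_contra h; push_neg at h
    have hf := hfac (1+s)
    have hf1 : (1+s) - l1 ≤ 0 := by linarith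
    have hf2 : 0 ≤ (1+s) - l2 := by linarith [h2ub.1]
    have hf3 : 0 ≤ (1+s) - l3 := by linarith
    have step : ((1+s) - l1) * ((1+s) - l2) ≤ 0 := mul_nonpos_iff.mpr (Or.inr ⟨hf1, hf2⟩)
    linarith [mul_nonpos_iff.mpr (Or.inr ⟨step, hf3⟩)]
  exact ⟨⟨h2lb, h2ub.1⟩, ⟨h3lb, h3ub⟩, ⟨h1gt, h1ub⟩⟩

private lemma tendsto_exp_neg_mul (c : ℝ) (hc : 0 < c) :
    Tendsto (fun β : ℝ => Real.exp (-(β * c))) atTop (nhds 0) :=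
  Real.tendsto_exp_atBot.comp (tendsto_neg_atBot_iff.mpr (tendsto_id.atTop_mul_const hc))

/-- **Lemma A.1 (eigenvalue ratios and the mass gap).** Fix `J > 0` and `μ_h`
with `μ_h + J > 0`, and let `λ₁(β) > λ₃(β) > λ₂(β)` be the three (distinct,
real) eigenvalues of the transfer matrix. Then as `β → ∞`:
`λ₂/λ₁ = −1 + ab(1+o(1))`, `λ₃/λ₂ = −a + ab(1+o(1))` and, setting
`m := −log|λ₂/λ₁|`, `e^{−m} = 1 − e^{−β(μ_h+3J)/2}(1+o(1))`
(note `ab = e^{−β(μ_h+3J)/2}`). -/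
theorem eigenvalue_ratios_and_mass_gap (J μh : ℝ) (hJ : 0 < J)
    (hμh : 0 < μh + J) (lam₁ lam₂ lam₃ : ℝ → ℝ)
    (hroots : ∀ β : ℝ, 0 < β →
      IsCharRoot (aOf β μh J) (bOf β J) (lam₁ β) ∧
      IsCharRoot (aOf β μh J) (bOf β J) (lam₂ β) ∧
      IsCharRoot (aOf β μh J) (bOf β J) (lam₃ β) ∧
      lam₂ β < lam₃ β ∧ lam₃ β < lam₁ β) :
    Tendsto (fun β => (lam₂ β / lam₁ β + 1) / (aOf β μh J * bOf β J)) atTop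
        (nhds 1) ∧
    Tendsto (fun β => (lam₃ β / lam₂ β + aOf β μh J) / (aOf β μh J * bOf β J))
        atTop (nhds 1) ∧
    Tendsto
        (fun β => (1 - Real.exp (-(-Real.log |lam₂ β / lam₁ β|))) /
          Real.exp (-(β * (μh + 3 * J) / 2))) atTop (nhds 1) := by
  have hApos : ∀ β, 0 < aOf β μh J := fun β => Real.exp_pos _
  have hBpos : ∀ β, 0 < bOf β J := fun β => Real.exp_pos _
  have hABpos : ∀ β, 0 < aOf β μh J * bOf β J := fun β => mul_pos (hApos β) (hBpos β)
  have hA0 : Tendsto (fun β => aOf β μh J) atTop (nhds 0) := by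
    have h := tendsto_exp_neg_mul ((μh + J) / 2) (by linarith)
    refine h.congr fun β => ?_
    simp only [aOf]; ring_nf
  have hB0 : Tendsto (fun β => bOf β J) atTop (nhds 0) := tendsto_exp_neg_mul J hJ
  have hAB0 : Tendsto (fun β => aOf β μh J * bOf β J) atTop (nhds 0) := by
    simpa using hA0.mul hB0
  have hS0 : Tendsto (fun β => Real.sqrt (aOf β μh J * bOf β J)) atTop (nhds 0) := by
    have := (Real.continuous_sqrt.tendsto 0).comp hAB0
    rw [Real.sqrt_zero] at this
    exact this
  have key : ∀ᶠ β in atTop,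
      (-1 < lam₂ β ∧ lam₂ β < -1 + Real.sqrt (aOf β μh J * bOf β J)) ∧
      (aOf β μh J - Real.sqrt (aOf β μh J * bOf β J) < lam₃ β ∧
        lam₃ β < aOf β μh J + Real.sqrt (aOf β μh J * bOf β J)) ∧
      (1 < lam₁ β ∧ lam₁ β < 1 + Real.sqrt (aOf β μh J * bOf β J)) := by
    filter_upwards [eventually_gt_atTop 0,
      hA0.eventually_lt_const (show (0:ℝ) < 1/2 by norm_num),
      hAB0.eventually_lt_const (show (0:ℝ) < 1/16 by norm_num)] with β hβ ha hab
    obtain ⟨hr1, hr2, hr3, h23, h31⟩ := hroots β hβ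
    unfold IsCharRoot at hr1 hr2 hr3
    exact root_bounds _ _ _ _ _ (hApos β) ha (hBpos β) hab hr1 hr2 hr3 h23 h31
  have hlim2 : Tendsto lam₂ atTop (nhds (-1)) := by
    refine tendsto_of_tendsto_of_tendsto_of_le_of_le' tendsto_const_nhds
      (show Tendsto (fun β => -1 + Real.sqrt (aOf β μh J * bOf β J)) atTop (nhds (-1)) by
        simpa using tendsto_const_nhds.add hS0) ?_ ?_
    · filter_upwards [key] with β hb; exact hb.1.1.le
    · filter_upwards [key] with β hb; exact hb.1.2.le
  have hlim3 : Tendsto lam₃ atTop (nhds 0) := by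
    refine tendsto_of_tendsto_of_tendsto_of_le_of_le'
      (show Tendsto (fun β => aOf β μh J - Real.sqrt (aOf β μh J * bOf β J)) atTop (nhds 0) by
        simpa using hA0.sub hS0)
      (show Tendsto (fun β => aOf β μh J + Real.sqrt (aOf β μh J * bOf β J)) atTop (nhds 0) by
        simpa using hA0.add hS0) ?_ ?_
    · filter_upwards [key] with β hb; exact hb.2.1.1.le
    · filter_upwards [key] with β hb; exact hb.2.1.2.le
  have hlim1 : Tendsto lam₁ atTop (nhds 1) := by
    refine tendsto_of_tendsto_of_tendsto_of_le_of_le' tendsto_const_nhds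
      (show Tendsto (fun β => 1 + Real.sqrt (aOf β μh J * bOf β J)) atTop (nhds 1) by
        simpa using tendsto_const_nhds.add hS0) ?_ ?_
    · filter_upwards [key] with β hb; exact hb.2.2.1.le
    · filter_upwards [key] with β hb; exact hb.2.2.2.le
  have basic : ∀ᶠ β in atTop, 0 < β ∧ aOf β μh J < 1/2 ∧
      Real.sqrt (aOf β μh J * bOf β J) < 1/4 := by
    filter_upwards [eventually_gt_atTop 0,
      hA0.eventually_lt_const (show (0:ℝ) < 1/2 by norm_num),
      hS0.eventually_lt_const (show (0:ℝ) < 1/4 by norm_num)] with β h1 h2 h3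
    exact ⟨h1, h2, h3⟩
  have hR2 : Tendsto (fun β => (lam₂ β + 1) / (aOf β μh J * bOf β J)) atTop (nhds (1/2)) := by
    have hden : Tendsto (fun β => (lam₂ β - aOf β μh J) * (lam₂ β - 1)) atTop
        (nhds (((-1) - 0) * ((-1) - 1))) := (hlim2.sub hA0).mul (hlim2.sub tendsto_const_nhds)
    have h2 : Tendsto (fun β => 1 / ((lam₂ β - aOf β μh J) * (lam₂ β - 1))) atTop
        (nhds (1/2)) := by
      have h := (tendsto_const_nhds : Tendsto (fun _ : ℝ => (1:ℝ)) atTop (nhds 1)).div hden (by norm_num)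
      norm_num at h
      exact h
    refine h2.congr' ?_
    filter_upwards [key, basic] with β hb hbas
    obtain ⟨hβ, ha, hs⟩ := hbas
    obtain ⟨hr1, hr2, hr3, h23, h31⟩ := hroots β hβ
    unfold IsCharRoot at hr2
    have h2a : lam₂ β - aOf β μh J ≠ 0 := by
      have := hApos β; intro hc; nlinarith [hb.1.2]
    have h21 : lam₂ β - 1 ≠ 0 := by intro hc; nlinarith [hb.1.2]
    have hab : aOf β μh J * bOf β J ≠ 0 := (hABpos β).ne'
    field_simp
    rw [eq_div_iff hab]
    linear_combination -hr2
  have hR1 : Tendsto (fun β => (lam₁ β - 1) / (aOf β μh J * bOf β J)) atTop (nhds (1/2)) := by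
    have hden : Tendsto (fun β => (lam₁ β - aOf β μh J) * (lam₁ β + 1)) atTop
        (nhds ((1 - 0) * (1 + 1))) := (hlim1.sub hA0).mul (hlim1.add tendsto_const_nhds)
    have h2 : Tendsto (fun β => 1 / ((lam₁ β - aOf β μh J) * (lam₁ β + 1))) atTop
        (nhds (1/2)) := by
      have h := (tendsto_const_nhds : Tendsto (fun _ : ℝ => (1:ℝ)) atTop (nhds 1)).div hden (by norm_num)
      norm_num at h
      exact h
    refine h2.congr' ?_
    filter_upwards [key, basic] with β hb hbas
    obtain ⟨hβ, ha, hs⟩ := hbas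
    obtain ⟨hr1, hr2, hr3, h23, h31⟩ := hroots β hβ
    unfold IsCharRoot at hr1
    have h1a : lam₁ β - aOf β μh J ≠ 0 := by intro hc; nlinarith [hb.2.2.1]
    have h11 : lam₁ β + 1 ≠ 0 := by intro hc; nlinarith [hb.2.2.1]
    have hab : aOf β μh J * bOf β J ≠ 0 := (hABpos β).ne'
    field_simp
    rw [eq_div_iff hab]
    linear_combination -hr1
  have hR3 : Tendsto (fun β => (lam₃ β - aOf β μh J) / (aOf β μh J * bOf β J)) atTop
      (nhds (-1)) := by
    have hden : Tendsto (fun β => lam₃ β ^ 2 - 1) atTop (nhds ((0:ℝ) ^ 2 - 1)) :=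
      (hlim3.pow 2).sub tendsto_const_nhds
    have h2 : Tendsto (fun β => 1 / (lam₃ β ^ 2 - 1)) atTop (nhds (-1)) := by
      have h := (tendsto_const_nhds : Tendsto (fun _ : ℝ => (1:ℝ)) atTop (nhds 1)).div hden (by norm_num)
      norm_num at h
      exact h
    refine h2.congr' ?_
    filter_upwards [key, basic] with β hb hbas
    obtain ⟨hβ, ha, hs⟩ := hbas
    obtain ⟨hr1, hr2, hr3, h23, h31⟩ := hroots β hβ
    unfold IsCharRoot at hr3
    have habs : lam₃ β < 3/4 := by linarith [hb.2.1.2]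
    have habs2 : -(3/4) < lam₃ β := by linarith [hb.2.1.1, hApos β]
    have hne : lam₃ β ^ 2 - 1 ≠ 0 := by nlinarith
    have hab : aOf β μh J * bOf β J ≠ 0 := (hABpos β).ne'
    field_simp
    rw [eq_div_iff hab]
    linear_combination -hr3
  have T1 : Tendsto (fun β => (lam₂ β / lam₁ β + 1) / (aOf β μh J * bOf β J)) atTop
      (nhds 1) := by
    have h := (hR2.add hR1).mul (hlim1.inv₀ one_ne_zero)
    norm_num at h
    refine h.congr' ?_
    filter_upwards [key] with β hb
    have h1 : lam₁ β ≠ 0 := by intro hc; nlinarith [hb.2.2.1]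
    have hab : aOf β μh J * bOf β J ≠ 0 := (hABpos β).ne'
    field_simp
    ring_nf
  have T2 : Tendsto (fun β => (lam₃ β / lam₂ β + aOf β μh J) / (aOf β μh J * bOf β J)) atTop
      (nhds 1) := by
    have h := (hR3.add (hA0.mul hR2)).mul (hlim2.inv₀ (by norm_num))
    norm_num at h
    refine h.congr' ?_
    filter_upwards [key, basic] with β hb hbas
    have h2 : lam₂ β ≠ 0 := ne_of_lt (show lam₂ β < 0 by linarith [hb.1.2, hbas.2.2])
    have hab : aOf β μh J * bOf β J ≠ 0 := (hABpos β).ne'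
    field_simp
    ring
  have T3 : Tendsto (fun β => (1 - Real.exp (-(-Real.log |lam₂ β / lam₁ β|))) /
      Real.exp (-(β * (μh + 3 * J) / 2))) atTop (nhds 1) := by
    refine T1.congr' ?_
    filter_upwards [key, basic] with β hb hbas
    have h1 : 0 < lam₁ β := by linarith [hb.2.2.1]
    have h2 : lam₂ β < 0 := by linarith [hb.1.2, hbas.2.2]
    have hx : lam₂ β / lam₁ β < 0 := div_neg_of_neg_of_pos h2 h1
    have hexp : Real.exp (-(β * (μh + 3 * J) / 2)) = aOf β μh J * bOf β J := by
      simp only [aOf, bOf, ← Real.exp_add]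
      congr 1; ring
    rw [neg_neg, Real.exp_log (abs_pos.mpr hx.ne), abs_of_neg hx, hexp]
    ring_nf
  exact ⟨T1, T2, T3⟩
end
end
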